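/- arXiv:2003.05270 — 8 statements merged into one kernel-verified Lean document; each statement's English description precedes it below -/
import Mathlib

section
/- Let g, h : F(Σ) → F(Δ) be homomorphisms with h injective. Define H₀ = F(Σ) and H_{i+1} = g⁻¹(g(H_i) ∩ h(H_i)), and SD(g,h) = ∩_{i≥0} H_i. Then g(SD(g,h)) ≤ h(SD(g,h)), and SD(g,h) is the maximal subgroup K of F(Σ) (with respect to inclusion) satisfying g(K) ≤ h(K). -/
/-- The descending chain in the definition of the stable domain:
`H₀ = F(Σ)`, `H_{i+1} = g⁻¹(g(H_i) ∩ h(H_i))`. -/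
def SDChain {α β : Type} (g h : FreeGroup α →* FreeGroup β) : ℕ → Subgroup (FreeGroup α)
  | 0 => ⊤
  | i + 1 =>
      Subgroup.comap g (Subgroup.map g (SDChain g h i) ⊓ Subgroup.map h (SDChain g h i))

/-- The stable domain `SD(g,h) = ∩_{i≥0} H_i`. -/
def SD {α β : Type} (g h : FreeGroup α →* FreeGroup β) : Subgroup (FreeGroup α) :=
  ⨅ i, SDChain g h i

/-- if `h` is injective then `g(SD(g,h)) ≤ h(SD(g,h))` and `SD(g,h)` is the
maximal subgroup `K` of `F(Σ)` with `g(K) ≤ h(K)`. -/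
theorem stmt_1 {α β : Type} (g h : FreeGroup α →* FreeGroup β)
    (hinj : Function.Injective h) :
    Subgroup.map g (SD g h) ≤ Subgroup.map h (SD g h) ∧
    ∀ K : Subgroup (FreeGroup α), Subgroup.map g K ≤ Subgroup.map h K → K ≤ SD g h := by
  constructor
  · rintro z ⟨x, hx, rfl⟩
    have hxc : ∀ i, x ∈ SDChain g h i := fun i => (Subgroup.mem_iInf.mp hx) i
    -- For every i, g x ∈ h(SDChain i)
    have key : ∀ i, ∃ y ∈ SDChain g h i, h y = g x := by
      intro i
      have := hxc (i + 1)
      simp only [SDChain, Subgroup.mem_comap, Subgroup.mem_inf] at this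
      obtain ⟨y, hy, hyx⟩ := this.2
      exact ⟨y, hy, hyx⟩
    obtain ⟨y₀, hy₀, hy₀x⟩ := key 0
    refine ⟨y₀, Subgroup.mem_iInf.mpr fun i => ?_, hy₀x⟩
    obtain ⟨y, hy, hyx⟩ := key i
    have : y = y₀ := hinj (by rw [hyx, hy₀x])
    rwa [this] at hy
  · intro K hK
    have : ∀ i, K ≤ SDChain g h i := by
      intro i
      induction i with
      | zero => exact le_top
      | succ n ih =>
        intro x hx
        simp only [SDChain, Subgroup.mem_comap, Subgroup.mem_inf]
        refine ⟨⟨x, ih hx, rfl⟩, ?_⟩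
        obtain ⟨y, hy, hyx⟩ := hK ⟨x, hx, rfl⟩
        exact ⟨y, ih hy, hyx⟩
    exact le_iInf this
end

section
/- Let A and B be inert subgroups of a free group F. Then A ∩ B is inert in F. -/
/-- `rkLe H n` : the (free) subgroup `H` has rank at most `n`. -/
def rkLe {G : Type*} [Group G] (H : Subgroup G) (n : ℕ) : Prop :=
  ∃ S : Finset G, S.card ≤ n ∧ Subgroup.closure (S : Set G) = H

/-- A subgroup `H` of a free group is inert if `rk(H ∩ K) ≤ rk(K)` for every `K`. -/
def Inert {G : Type*} [Group G] (H : Subgroup G) : Prop :=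
  ∀ K : Subgroup G, ∀ n : ℕ, rkLe K n → rkLe (H ⊓ K) n

/-- the intersection of two inert subgroups of a free group is inert. -/
theorem stmt_4 {α : Type} (A B : Subgroup (FreeGroup α))
    (hA : Inert A) (hB : Inert B) : Inert (A ⊓ B) := by
  intro K n hK
  have h := hA (B ⊓ K) n (hB K n hK)
  rwa [← inf_assoc] at h
end

section
/- Let {A_i}_{i∈ℕ} be a countable family of inert subgroups of a free group F(Σ). Then the intersection ∩_{i=0}^∞ A_i is inert in F(Σ). -/
set_option linter.unusedSectionVars false
set_option linter.unusedVariables false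


namespace NT
open FreeGroup List

variable {α : Type}

abbrev Wrd (α : Type) := List (α × Bool)

def flipL (p : α × Bool) : α × Bool := (p.1, !p.2)

@[simp] lemma flipL_flipL (p : α × Bool) : flipL (flipL p) = p := by simp [flipL]

lemma invRev_cons (p : α × Bool) (w : Wrd α) : invRev (p :: w) = invRev w ++ [flipL p] := by
  simp [invRev, flipL]

@[simp] lemma invRev_nil' : invRev ([] : Wrd α) = [] := rfl

lemma length_invRev' (w : Wrd α) : (invRev w).length = w.length := by
  simp [invRev]

def Reduced (L : Wrd α) : Prop := List.Chain' (fun a b => b ≠ flipL a) L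

lemma Reduced.infix {L L' : Wrd α} (h : Reduced L) (h' : L' <:+: L) : Reduced L' :=
  List.IsChain.infix h h'

lemma reduced_ne' {L : Wrd α} (h : Reduced L) {i : ℕ} (hj : i + 1 < L.length) :
    L[i + 1]'hj ≠ flipL (L[i]'(by omega)) := by
  rw [Reduced, List.Chain', List.isChain_iff_getElem] at h
  have := h i (by omega)
  simpa using this

lemma not_reduced_decomp {L : Wrd α} (h : ¬ Reduced L) :
    ∃ (L₁ L₂ : Wrd α) (x : α) (b : Bool), L = L₁ ++ (x, b) :: (x, !b) :: L₂ := by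
  induction L with
  | nil => exact absurd List.isChain_nil h
  | cons a t ih =>
    cases t with
    | nil => exact absurd (List.isChain_singleton a) h
    | cons b t2 =>
      rw [Reduced, List.Chain', List.isChain_cons_cons] at h
      by_cases hab : b = flipL a
      · exact ⟨[], t2, a.1, a.2, by rw [hab]; rfl⟩
      · have hb : ¬ Reduced (b :: t2) := fun hr => h ⟨hab, hr⟩
        obtain ⟨L₁, L₂, x, bb, e⟩ := ih hb
        exact ⟨a :: L₁, L₂, x, bb, by rw [List.cons_append, e]⟩

variable [DecidableEq α]

lemma Reduced.reduce_eq {L : Wrd α} (h : Reduced L) : reduce L = L := by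
  rcases Relation.ReflTransGen.cases_head (reduce.red (L := L)) with heq | ⟨L', hstep, _⟩
  · exact heq.symm
  · exfalso
    cases hstep with
    | @not L₁ L₂ x b =>
      have hinf : Reduced [(x, b), (x, !b)] :=
        h.infix ⟨L₁, L₂, by simp⟩
      simp [Reduced, List.Chain', List.isChain_cons_cons, flipL] at hinf

lemma reduced_of_reduce_eq {L : Wrd α} (h : reduce L = L) : Reduced L := by
  by_contra hn
  obtain ⟨L₁, L₂, x, b, rfl⟩ := not_reduced_decomp hn
  have hstep : Red.Step (L₁ ++ (x, b) :: (x, !b) :: L₂) (L₁ ++ L₂) := Red.Step.not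
  have hred : Red (reduce (L₁ ++ (x, b) :: (x, !b) :: L₂)) (L₁ ++ L₂) := by
    rw [h]; exact hstep.to_red
  have := reduce.min hred
  rw [h] at this
  have hl := congrArg List.length this
  simp at hl
  omega

lemma reduced_toWord (x : FreeGroup α) : Reduced x.toWord :=
  reduced_of_reduce_eq (reduce_toWord x)

omit [DecidableEq α] in
lemma red_invRev_append_self (T : Wrd α) : Red (invRev T ++ T) [] := by
  induction T with
  | nil => simp [FreeGroup.Red.refl]
  | cons p T ih =>
    have h1 : Red.Step (invRev T ++ (p.1, !p.2) :: (p.1, p.2) :: T) (invRev T ++ T) :=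
      Red.Step.not_rev
    have he : invRev (p :: T) ++ p :: T = invRev T ++ (p.1, !p.2) :: (p.1, p.2) :: T := by
      rw [invRev_cons]
      simp [flipL]
    rw [he]
    exact Red.trans h1.to_red ih

lemma reduce_append_cancel {X Y P : Wrd α} {d : ℕ}
    (hX : Reduced X) (hY : Reduced Y) (hd : d ≤ Y.length)
    (hdec : X = P ++ invRev (Y.take d))
    (hj : ∀ a ∈ P.getLast?, ∀ c ∈ (Y.drop d).head?, c ≠ flipL a) :
    reduce (X ++ Y) = P ++ Y.drop d := by
  have hred : Red (X ++ Y) (P ++ Y.drop d) := by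
    have h0 : Red ((invRev (Y.take d) ++ Y.take d) ++ Y.drop d) ([] ++ Y.drop d) :=
      Red.append_append (red_invRev_append_self _) Red.refl
    have h1 : Red (invRev (Y.take d) ++ Y) (Y.drop d) := by
      have hY2 : Y.take d ++ Y.drop d = Y := List.take_append_drop d Y
      have : invRev (Y.take d) ++ Y = (invRev (Y.take d) ++ Y.take d) ++ Y.drop d := by
        rw [List.append_assoc, hY2]
      rw [this]
      simpa using h0
    have h2 : Red (P ++ (invRev (Y.take d) ++ Y)) (P ++ Y.drop d) :=
      Red.append_append Red.refl h1
    rw [hdec, List.append_assoc]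
    exact h2
  have hr2 : Reduced (P ++ Y.drop d) := by
    rw [Reduced, List.Chain', List.isChain_append]
    refine ⟨?_, ?_, hj⟩
    · exact hX.infix ⟨[], invRev (Y.take d), by rw [hdec]; simp⟩
    · exact hY.infix ⟨Y.take d, [], by simp⟩
  calc reduce (X ++ Y) = reduce (P ++ Y.drop d) := reduce.eq_of_red hred
    _ = P ++ Y.drop d := hr2.reduce_eq

omit [DecidableEq α] in
lemma exists_cancel_word (Y : Wrd α) : Reduced Y → ∀ X : Wrd α, Reduced X →
    ∃ d P, d ≤ Y.length ∧ X = P ++ invRev (Y.take d) ∧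
      (∀ a ∈ P.getLast?, ∀ c ∈ (Y.drop d).head?, c ≠ flipL a) := by
  induction Y with
  | nil => intro _ X _; exact ⟨0, X, by simp, by simp, by simp⟩
  | cons y Y₀ ih =>
    intro hY X hX
    rcases X.eq_nil_or_concat with rfl | ⟨X₀, x, rfl⟩
    · exact ⟨0, [], by simp, by simp, by simp⟩
    · rw [List.concat_eq_append] at *
      by_cases hxy : x = flipL y
      · have hX₀ : Reduced X₀ := hX.infix ⟨[], [x], by simp⟩
        have hY₀ : Reduced Y₀ := hY.infix ⟨[y], [], by simp⟩
        obtain ⟨d, P, hd, hdec, hj⟩ := ih hY₀ X₀ hX₀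
        refine ⟨d + 1, P, by simpa using Nat.succ_le_succ hd, ?_, ?_⟩
        · rw [List.take_succ_cons, invRev_cons, ← List.append_assoc, ← hdec, hxy]
        · simpa using hj
      · refine ⟨0, X₀ ++ [x], by simp, by simp, ?_⟩
        intro a ha c hc
        rw [List.getLast?_append_of_ne_nil _ (by simp : ([x] : Wrd α) ≠ [])] at ha
        simp only [List.getLast?_singleton, List.drop_zero, List.head?_cons,
          Option.mem_def, Option.some.injEq] at ha hc
        subst ha; subst hc
        intro hcon
        exact hxy (by rw [hcon, flipL_flipL])

lemma norm_def (x : FreeGroup α) : x.norm = x.toWord.length := rfl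

lemma toWord_mul (x y : FreeGroup α) : (x * y).toWord = reduce (x.toWord ++ y.toWord) := by
  conv_lhs => rw [← mk_toWord (x := x), ← mk_toWord (x := y), mul_mk]
  exact toWord_mk

lemma exists_pc (x y : FreeGroup α) :
    ∃ d P, d ≤ y.norm ∧ x.toWord = P ++ invRev (y.toWord.take d) ∧
      (x * y).toWord = P ++ y.toWord.drop d ∧ x.norm = P.length + d ∧
      x.norm + y.norm = (x * y).norm + 2 * d ∧
      (∀ a ∈ P.getLast?, ∀ c ∈ (y.toWord.drop d).head?, c ≠ flipL a) := by
  obtain ⟨d, P, hd, hdec, hj⟩ :=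
    exists_cancel_word y.toWord (reduced_toWord y) x.toWord (reduced_toWord x)
  have hmul : (x * y).toWord = P ++ y.toWord.drop d := by
    rw [toWord_mul]
    exact reduce_append_cancel (reduced_toWord x) (reduced_toWord y) hd hdec hj
  have hlen : x.norm = P.length + d := by
    rw [norm_def, hdec, List.length_append, length_invRev', List.length_take]
    rw [Nat.min_eq_left hd]
  refine ⟨d, P, hd, hdec, hmul, hlen, ?_, hj⟩
  have h2 : (x * y).norm = P.length + (y.toWord.length - d) := by
    rw [norm_def, hmul, List.length_append, List.length_drop]
  rw [hlen, h2, norm_def y]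
  omega

/-- self-overlap bound : `|x| ≤ |x*x|`. -/
lemma norm_le_norm_mul_self (x : FreeGroup α) : x.norm ≤ (x * x).norm := by
  obtain ⟨d, P, hd, hdec, _, hlen, hnorm, _⟩ := exists_pc x x
  set X := x.toWord with hX
  set L := x.norm with hL
  by_cases h2d : 2 * d ≤ L
  · omega
  · exfalso
    push_neg at h2d
    have hLlen : X.length = L := rfl
    have hPlen : P.length = L - d := by omega
    have hEq : ∀ i, i < d → X[L - d + i]? = (X[d - 1 - i]?).map flipL := by
      intro i hi
      have h1 : X[L - d + i]? = (invRev (X.take d))[i]? := by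
        conv_lhs => rw [hdec]
        rw [List.getElem?_append_right (by omega)]
        congr 1
        omega
      have h2 : invRev (X.take d) = ((X.take d).map flipL).reverse := rfl
      have hlt : i < ((X.take d).map flipL).length := by
        simp [List.length_take]; omega
      have h3 : (((X.take d).map flipL).reverse)[i]? = (((X.take d).map flipL))[d - 1 - i]? := by
        rw [List.getElem?_reverse hlt]
        congr 1
        simp [List.length_take]
        omega
      rw [h1, h2, h3, List.getElem?_map]
      rw [List.getElem?_take, if_pos (by omega : d - 1 - i < d)]
    have hRed : Reduced X := reduced_toWord x
    have hL1 : 1 ≤ L := by omega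
    rcases Nat.even_or_odd L with ⟨m, hm⟩ | ⟨m, hm⟩
    · have hm1 : 1 ≤ m := by omega
      have hcontra := hEq (d - 1 - m) (by omega)
      rw [show L - d + (d - 1 - m) = m - 1 from by omega,
          show d - 1 - (d - 1 - m) = m from by omega] at hcontra
      rw [List.getElem?_eq_getElem (by omega : m - 1 < X.length),
          List.getElem?_eq_getElem (by omega : m < X.length)] at hcontra
      simp only [Option.map_some, Option.some.injEq] at hcontra
      have hne := reduced_ne' hRed (i := m - 1) (by omega)
      apply hne
      have hc2 : flipL (X[m - 1]'(by omega)) = X[m]'(by omega) := by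
        rw [hcontra, flipL_flipL]
      simp only [show m - 1 + 1 = m from by omega]
      rw [← hc2]
    · have hcontra := hEq (d - 1 - m) (by omega)
      rw [show L - d + (d - 1 - m) = m from by omega,
          show d - 1 - (d - 1 - m) = m from by omega] at hcontra
      rw [List.getElem?_eq_getElem (by omega : m < X.length)] at hcontra
      simp only [Option.map_some, Option.some.injEq] at hcontra
      have h5 := congrArg Prod.snd hcontra
      simp [flipL] at h5

end NT

namespace NT
open FreeGroup List

variable {α : Type}

lemma not_chain'_decomp {β : Type*} {R : β → β → Prop} {l : List β} (h : ¬ List.Chain' R l) :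
    ∃ l₁ a b l₂, l = l₁ ++ a :: b :: l₂ ∧ ¬ R a b := by
  induction l with
  | nil => exact absurd List.isChain_nil h
  | cons a t ih =>
    cases t with
    | nil => exact absurd (List.isChain_singleton a) h
    | cons b t2 =>
      rw [List.Chain', List.isChain_cons_cons] at h
      by_cases hab : R a b
      · have hb : ¬ List.Chain' R (b :: t2) := fun hr => h ⟨hab, hr⟩
        obtain ⟨l₁, aa, bb, l₂, e, hr⟩ := ih hb
        exact ⟨a :: l₁, aa, bb, l₂, by rw [List.cons_append, e], hr⟩
      · exact ⟨[], a, b, t2, rfl, hab⟩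

lemma exists_chain_expression {G : Type*} [Group G] :
    ∀ (n : ℕ) (l : List G), l.length ≤ n →
    ∃ l' : List G, (∀ x ∈ l', x ∈ l) ∧ List.Chain' (fun a b => a * b ≠ 1) l' ∧ l'.prod = l.prod := by
  intro n
  induction n with
  | zero =>
    intro l hl
    rw [Nat.le_zero, List.length_eq_zero_iff] at hl
    exact ⟨l, fun x hx => hx, by simp [hl, List.Chain'], rfl⟩
  | succ n ih =>
    intro l hl
    by_cases hc : List.Chain' (fun a b : G => a * b ≠ 1) l
    · exact ⟨l, fun x hx => hx, hc, rfl⟩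
    · obtain ⟨l₁, a, b, l₂, rfl, hab⟩ := not_chain'_decomp hc
      rw [not_not] at hab
      have hlen : (l₁ ++ l₂).length ≤ n := by
        simp only [List.length_append, List.length_cons] at hl ⊢
        omega
      obtain ⟨l', hsub, hch, hp⟩ := ih (l₁ ++ l₂) hlen
      refine ⟨l', ?_, hch, ?_⟩
      · intro x hx
        have := hsub x hx
        simp only [List.mem_append, List.mem_cons] at this ⊢
        tauto
      · rw [hp]
        simp only [List.prod_append, List.prod_cons]
        rw [← mul_assoc (a := a), hab, one_mul]

lemma exists_list_of_mem_closure' {G : Type*} [Group G] {s : Set G} {x : G}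
    (hx : x ∈ Subgroup.closure s) :
    ∃ l : List G, (∀ y ∈ l, y ∈ s ∨ y⁻¹ ∈ s) ∧ l.prod = x := by
  induction hx using Subgroup.closure_induction with
  | mem x hx => exact ⟨[x], by simp [hx], by simp⟩
  | one => exact ⟨[], by simp, rfl⟩
  | mul x y hx hy ihx ihy =>
    obtain ⟨lx, hlx, hpx⟩ := ihx
    obtain ⟨ly, hly, hpy⟩ := ihy
    refine ⟨lx ++ ly, ?_, by simp [List.prod_append, hpx, hpy]⟩
    intro z hz
    rcases List.mem_append.1 hz with h | h
    · exact hlx z h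
    · exact hly z h
  | inv x hx ihx =>
    obtain ⟨l, hl, hp⟩ := ihx
    refine ⟨(l.map (fun z => z⁻¹)).reverse, ?_, ?_⟩
    · intro y hy
      rw [List.mem_reverse, List.mem_map] at hy
      obtain ⟨z, hz, rfl⟩ := hy
      have := hl z hz
      simpa [or_comm] using this
    · rw [← hp, ← List.prod_inv_reverse]

variable [DecidableEq α]

def symS (U : Finset (FreeGroup α)) : Set (FreeGroup α) := {x | x ∈ U ∨ x⁻¹ ∈ U}

lemma inv_mem_symS {U : Finset (FreeGroup α)} {x : FreeGroup α} (h : x ∈ symS U) :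
    x⁻¹ ∈ symS U := by
  rcases h with h | h
  · exact Or.inr (by simpa)
  · exact Or.inl h

structure NielsenRed (U : Finset (FreeGroup α)) : Prop where
  not_one : (1 : FreeGroup α) ∉ U
  n1 : ∀ u ∈ symS U, ∀ v ∈ symS U, u * v ≠ 1 → u ≠ v →
        v.norm ≤ (u * v).norm ∧ u.norm ≤ (u * v).norm
  n2 : ∀ u ∈ symS U, ∀ v ∈ symS U, ∀ w ∈ symS U, u * v ≠ 1 → v * w ≠ 1 →
        u.norm + w.norm < (u * v).norm + (v * w).norm

lemma NielsenRed.one_not_mem_symS {U : Finset (FreeGroup α)} (h : NielsenRed U) :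
    (1 : FreeGroup α) ∉ symS U := by
  intro hc
  rcases hc with hc | hc
  · exact h.not_one hc
  · rw [inv_one] at hc
    exact h.not_one hc

lemma NielsenRed.pc_bound {U : Finset (FreeGroup α)} (h : NielsenRed U) {u v : FreeGroup α}
    (hu : u ∈ symS U) (hv : v ∈ symS U) (huv : u * v ≠ 1) {d : ℕ}
    (hd : u.norm + v.norm = (u * v).norm + 2 * d) :
    2 * d ≤ u.norm ∧ 2 * d ≤ v.norm := by
  by_cases heq : u = v
  · subst heq
    have := norm_le_norm_mul_self u
    omega
  · have := h.n1 u hu v hv huv heq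
    omega

lemma NielsenRed.key_aux {U : Finset (FreeGroup α)} (h : NielsenRed U) :
    ∀ l : List (FreeGroup α), ∀ hne : l ≠ [], (∀ x ∈ l, x ∈ symS U) →
      List.Chain' (fun a b => a * b ≠ 1) l →
      ∃ c q, (l.prod).toWord = q ++ ((l.getLast hne).toWord.drop c) ∧
        (c = 0 ∨ ∃ v', v' ∈ symS U ∧ v' * (l.getLast hne) ≠ 1 ∧
          v'.norm + (l.getLast hne).norm = (v' * (l.getLast hne)).norm + 2 * c) ∧
        (l.getLast hne).norm ≤ (l.prod).norm ∧ ∀ x ∈ l, x.norm ≤ (l.prod).norm := by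
  intro l
  induction l using List.reverseRecOn with
  | nil => intro hne; exact absurd rfl hne
  | append_singleton l₀ u ih =>
    intro hne hmem hchain
    have hu : u ∈ symS U := hmem u (by simp)
    have hgl : (l₀ ++ [u]).getLast hne = u := by
      simp [List.getLast_append]
    rcases eq_or_ne l₀ [] with rfl | hl₀
    · refine ⟨0, [], ?_, Or.inl rfl, ?_, ?_⟩ <;> simp [hgl]
    · have hmem₀ : ∀ x ∈ l₀, x ∈ symS U := fun x hx => hmem x (by simp [hx])
      have hch₀ : List.Chain' (fun a b : FreeGroup α => a * b ≠ 1) l₀ :=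
        (List.isChain_append.1 hchain).1
      set v := l₀.getLast hl₀ with hv_def
      have hv : v ∈ symS U := hmem₀ v (List.getLast_mem hl₀)
      have hvu : v * u ≠ 1 := by
        have hj := (List.isChain_append.1 hchain).2.2
        exact hj v (by rw [List.getLast?_eq_getLast hl₀, Option.mem_def, hv_def]) u rfl
      obtain ⟨c, q, hW, hjust, hCv, hD⟩ := ih hl₀ hmem₀ hch₀
      rw [← hv_def] at hW hjust hCv
      obtain ⟨d, Pv, hd, hdecV, hmulVU, hlenV, hnormVU, hjV⟩ := exists_pc v u
      have hbd := h.pc_bound hv hu hvu hnormVU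
      have hNv1 : 1 ≤ v.norm := by
        have hvne : v ≠ 1 := fun hc => h.one_not_mem_symS (hc ▸ hv)
        have hnz : v.norm ≠ 0 := fun h0 => hvne (FreeGroup.norm_eq_zero.1 h0)
        omega
      have hcd : c + d < v.norm := by
        rcases hjust with rfl | ⟨v', hv', hv'v, hnv'⟩
        · omega
        · have hN2 := h.n2 v' hv' v hv u hu hv'v hvu
          omega
      -- word assembly
      have hPvlen : Pv.length + d = v.norm := by omega
      have hcP : c < Pv.length := by omega
      have hSdec : v.toWord.drop c = Pv.drop c ++ invRev (u.toWord.take d) := by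
        rw [hdecV, List.drop_append_of_le_length (by omega)]
      have hXdec : (l₀.prod).toWord = (q ++ Pv.drop c) ++ invRev (u.toWord.take d) := by
        rw [hW, hSdec, List.append_assoc]
      have hPd_ne : Pv.drop c ≠ [] := by
        apply List.ne_nil_of_length_pos
        rw [List.length_drop]
        omega
      have hJ : ∀ a ∈ (q ++ Pv.drop c).getLast?, ∀ cc ∈ (u.toWord.drop d).head?,
          cc ≠ flipL a := by
        rw [List.getLast?_append_of_ne_nil _ hPd_ne]
        have hPvlast : Pv.getLast? = (Pv.drop c).getLast? := by
          conv_lhs => rw [← List.take_append_drop c Pv]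
          rw [List.getLast?_append_of_ne_nil _ hPd_ne]
        rw [← hPvlast]
        exact hjV
      have hmulW : ((l₀ ++ [u]).prod).toWord = (q ++ Pv.drop c) ++ u.toWord.drop d := by
        rw [List.prod_append, List.prod_cons, List.prod_nil, mul_one, toWord_mul]
        exact reduce_append_cancel (reduced_toWord _) (reduced_toWord u) hd hXdec hJ
      -- norms
      have hNold : (l₀.prod).norm = q.length + (v.norm - c) := by
        rw [norm_def, hW, List.length_append, List.length_drop, ← norm_def]
      have hNnew : ((l₀ ++ [u]).prod).norm = (q.length + (Pv.length - c)) + (u.norm - d) := by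
        rw [norm_def, hmulW, List.length_append, List.length_append, List.length_drop,
          List.length_drop]
        rfl
      have hdu : d ≤ u.norm := by omega
      refine ⟨d, q ++ Pv.drop c, ?_, ?_, ?_, ?_⟩
      · rw [hmulW, hgl]
      · rw [hgl]
        exact Or.inr ⟨v, hv, hvu, hnormVU⟩
      · rw [hgl]
        omega
      · intro x hx
        rcases List.mem_append.1 hx with hx | hx
        · have := hD x hx
          omega
        · rw [List.mem_singleton] at hx
          subst hx
          omega

lemma NielsenRed.good {U : Finset (FreeGroup α)} (h : NielsenRed U) {x : FreeGroup α}
    (hx : x ∈ Subgroup.closure (U : Set (FreeGroup α))) :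
    x ∈ Subgroup.closure {u : FreeGroup α | u ∈ U ∧ u.norm ≤ x.norm} := by
  obtain ⟨l, hl, hp⟩ := exists_list_of_mem_closure' hx
  obtain ⟨l', hsub, hch, hp'⟩ := exists_chain_expression l.length l le_rfl
  rcases eq_or_ne l' [] with rfl | hne
  · have hx1 : x = 1 := by rw [← hp, ← hp', List.prod_nil]
    rw [hx1]
    exact one_mem _
  · have hmem' : ∀ y ∈ l', y ∈ symS U := by
      intro y hy
      have := hl y (hsub y hy)
      simpa [symS] using this
    obtain ⟨_, _, _, _, _, hkey⟩ := h.key_aux l' hne hmem' hch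
    have hprod : l'.prod = x := by rw [hp', hp]
    rw [← hprod]
    apply Subgroup.list_prod_mem
    intro y hy
    have hyn : y.norm ≤ (l'.prod).norm := hkey y hy
    rcases hmem' y hy with h1 | h1
    · exact Subgroup.subset_closure ⟨h1, hyn⟩
    · have h2 : y⁻¹ ∈ Subgroup.closure {u : FreeGroup α | u ∈ U ∧ u.norm ≤ (l'.prod).norm} :=
        Subgroup.subset_closure ⟨h1, by rw [FreeGroup.norm_inv_eq]; exact hyn⟩
      simpa using inv_mem h2

end NT

namespace NT
open FreeGroup List

variable {α : Type}

lemma invRev_append' (A B : Wrd α) : invRev (A ++ B) = invRev B ++ invRev A := by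
  simp [FreeGroup.invRev]

variable [DecidableEq α]

lemma symS_subset_closure {U : Finset (FreeGroup α)} {x : FreeGroup α} (hx : x ∈ symS U) :
    x ∈ Subgroup.closure (U : Set (FreeGroup α)) := by
  rcases hx with hx | hx
  · exact Subgroup.subset_closure hx
  · simpa using inv_mem (Subgroup.subset_closure (G := FreeGroup α) hx)

/-! ### letters -/

def lettersIn (Λ : Finset α) (x : FreeGroup α) : Prop := ∀ p ∈ x.toWord, p.1 ∈ Λ

def lettersOf (S : Finset (FreeGroup α)) : Finset α :=
  S.biUnion (fun s => (s.toWord.map Prod.fst).toFinset)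

lemma lettersIn_of_mem_closure {S : Finset (FreeGroup α)} {x : FreeGroup α}
    (hx : x ∈ Subgroup.closure (S : Set (FreeGroup α))) : lettersIn (lettersOf S) x := by
  induction hx using Subgroup.closure_induction with
  | mem y hy =>
    intro p hp
    refine Finset.mem_biUnion.2 ⟨y, hy, ?_⟩
    rw [List.mem_toFinset, List.mem_map]
    exact ⟨p, hp, rfl⟩
  | one => intro p hp; rw [FreeGroup.toWord_one] at hp; simp at hp
  | mul y z hy hz ihy ihz =>
    intro p hp
    have hsub := FreeGroup.toWord_mul_sublist y z
    rcases List.mem_append.1 (hsub.subset hp) with h | h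
    · exact ihy p h
    · exact ihz p h
  | inv y hy ihy =>
    intro p hp
    rw [FreeGroup.toWord_inv] at hp
    rw [FreeGroup.invRev, List.mem_reverse, List.mem_map] at hp
    obtain ⟨q, hq, rfl⟩ := hp
    exact ihy q hq

lemma lettersIn_inv {Λ : Finset α} {x : FreeGroup α} (h : lettersIn Λ x) : lettersIn Λ x⁻¹ := by
  intro p hp
  rw [FreeGroup.toWord_inv, FreeGroup.invRev, List.mem_reverse, List.mem_map] at hp
  obtain ⟨q, hq, rfl⟩ := hp
  exact h q hq

lemma lettersIn_invRev {Λ : Finset α} {w : Wrd α} (h : ∀ p ∈ w, p.1 ∈ Λ) :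
    ∀ p ∈ invRev w, p.1 ∈ Λ := by
  intro p hp
  rw [FreeGroup.invRev, List.mem_reverse, List.mem_map] at hp
  obtain ⟨q, hq, rfl⟩ := hp
  exact h q hq

/-! ### numeral valuation of words -/

def wval (b : ℕ) (kf : α × Bool → ℕ) : Wrd α → ℕ
  | [] => 0
  | p :: t => kf p * b ^ t.length + wval b kf t

lemma wval_append (b : ℕ) (kf : α × Bool → ℕ) (w₁ w₂ : Wrd α) :
    wval b kf (w₁ ++ w₂) = wval b kf w₁ * b ^ w₂.length + wval b kf w₂ := by
  induction w₁ with
  | nil => simp [wval]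
  | cons p t ih =>
    rw [List.cons_append, wval, wval, ih, List.length_append, pow_add]
    ring

lemma wval_lt_pow (b : ℕ) (kf : α × Bool → ℕ) (w : Wrd α) (hb : 1 ≤ b)
    (hw : ∀ p ∈ w, kf p < b) : wval b kf w < b ^ w.length := by
  induction w with
  | nil => simp [wval]
  | cons p t ih =>
    rw [wval, List.length_cons, pow_succ]
    have h2 : wval b kf t < b ^ t.length := ih (fun q hq => hw q (List.mem_cons_of_mem p hq))
    have h3 : kf p + 1 ≤ b := hw p (List.mem_cons_self)
    calc kf p * b ^ t.length + wval b kf t < (kf p + 1) * b ^ t.length := by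
          rw [add_mul, one_mul]; omega
      _ ≤ b * b ^ t.length := Nat.mul_le_mul_right _ h3
      _ = b ^ t.length * b := by ring

lemma wval_mono (b : ℕ) (kf : α × Bool → ℕ) (Z T T' : Wrd α) (x x' : α × Bool)
    (hlen : T.length = T'.length) (hk : kf x < kf x') (hb : 1 ≤ b)
    (hT : ∀ p ∈ T, kf p < b) :
    wval b kf (Z ++ x :: T) < wval b kf (Z ++ x' :: T') := by
  rw [wval_append, wval_append]
  have hlc : (x :: T).length = (x' :: T').length := by simp [hlen]
  rw [hlc]
  apply Nat.add_lt_add_left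
  rw [wval, wval, ← hlen]
  have h3 : wval b kf T < b ^ T.length := wval_lt_pow b kf T hb hT
  have h4 : (kf x + 1) * b ^ T.length ≤ kf x' * b ^ T.length :=
    Nat.mul_le_mul_right _ hk
  rw [add_mul, one_mul] at h4
  omega

lemma wval_firstdiff (b : ℕ) (kf : α × Bool → ℕ) (hb : 1 ≤ b) (A B Q₁ Q₂ : Wrd α) (k j : ℕ)
    (hA : A.length = k) (hB : B.length = k) (hQ : Q₁.length = Q₂.length) (hj : j < k)
    (hpre : A.take j = B.take j)
    (hkey : kf (A[j]'(by omega)) < kf (B[j]'(by omega)))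
    (hboundA : ∀ p ∈ A, kf p < b) (hboundQ : ∀ p ∈ Q₁, kf p < b) :
    wval b kf (A ++ Q₁) < wval b kf (B ++ Q₂) := by
  have hdA : A = A.take j ++ (A[j]'(by omega)) :: A.drop (j + 1) := by
    conv_lhs => rw [← List.take_append_drop j A]
    rw [List.drop_eq_getElem_cons (by omega)]
  have hdB : B = B.take j ++ (B[j]'(by omega)) :: B.drop (j + 1) := by
    conv_lhs => rw [← List.take_append_drop j B]
    rw [List.drop_eq_getElem_cons (by omega)]
  have e1 : A.take j ++ ((A[j]'(by omega)) :: (A.drop (j + 1) ++ Q₁)) = A ++ Q₁ := by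
    rw [← List.cons_append, ← List.append_assoc, ← hdA]
  have e2 : B.take j ++ ((B[j]'(by omega)) :: (B.drop (j + 1) ++ Q₂)) = B ++ Q₂ := by
    rw [← List.cons_append, ← List.append_assoc, ← hdB]
  rw [← e1, ← e2, hpre]
  refine wval_mono b kf _ _ _ _ _ ?_ hkey hb ?_
  · rw [List.length_append, List.length_append, List.length_drop, List.length_drop, hA, hB, hQ]
  · intro p hp
    rcases List.mem_append.1 hp with h | h
    · exact hboundA p (List.mem_of_mem_drop h)
    · exact hboundQ p h

/-! ### the measure -/

def halfW (x : FreeGroup α) : Wrd α := x.toWord.take ((x.norm + 1) / 2)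

def mA (b : ℕ) (kf : α × Bool → ℕ) (x : FreeGroup α) : ℕ :=
  wval b kf (halfW x) + wval b kf (halfW x⁻¹)

lemma mA_inv (b : ℕ) (kf : α × Bool → ℕ) (x : FreeGroup α) : mA b kf x⁻¹ = mA b kf x := by
  rw [mA, mA, inv_inv, add_comm]

noncomputable def keyF (Λ : Finset α) : α × Bool → ℕ :=
  fun p => 2 * Λ.toList.idxOf p.1 + (if p.2 then 1 else 0)

lemma keyF_lt (Λ : Finset α) {p : α × Bool} (hp : p.1 ∈ Λ) :
    keyF Λ p < 2 * Λ.card + 2 := by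
  have h1 : Λ.toList.idxOf p.1 < Λ.toList.length :=
    List.idxOf_lt_length_iff.2 (Finset.mem_toList.2 hp)
  rw [Finset.length_toList] at h1
  rw [keyF]
  split_ifs <;> omega

lemma keyF_inj (Λ : Finset α) {p q : α × Bool} (hp : p.1 ∈ Λ) (hq : q.1 ∈ Λ)
    (h : keyF Λ p = keyF Λ q) : p = q := by
  obtain ⟨a, ba⟩ := p
  obtain ⟨c, bc⟩ := q
  simp only [keyF] at h
  have hidx : Λ.toList.idxOf a = Λ.toList.idxOf c ∧ ba = bc := by
    cases ba <;> cases bc <;> simp at h ⊢ <;> omega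
  have := (List.idxOf_inj (Finset.mem_toList.2 hp)).1 hidx.1
  simp only at this
  rw [this, hidx.2]

/-! ### generating sets and the swap move -/

def gsets (B : Subgroup (FreeGroup α)) (n : ℕ) : Set (Finset (FreeGroup α)) :=
  {U | Subgroup.closure (U : Set (FreeGroup α)) = B ∧ U.card ≤ n}

def sigmaN (U : Finset (FreeGroup α)) : ℕ := ∑ x ∈ U, x.norm

lemma sym_mem_closure_eraseSym {U : Finset (FreeGroup α)} {x bb : FreeGroup α}
    (hx : x ∈ symS U) (h1 : x ≠ bb) (h2 : x ≠ bb⁻¹) :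
    x ∈ Subgroup.closure (((U.erase bb).erase bb⁻¹ : Finset (FreeGroup α)) : Set (FreeGroup α)) := by
  rcases hx with hx | hx
  · apply Subgroup.subset_closure
    rw [Finset.mem_coe, Finset.mem_erase, Finset.mem_erase]
    exact ⟨h2, h1, hx⟩
  · have hxx : x⁻¹ ∈ ((U.erase bb).erase bb⁻¹ : Finset (FreeGroup α)) := by
      rw [Finset.mem_erase, Finset.mem_erase]
      refine ⟨?_, ?_, hx⟩
      · intro hc; exact h1 (inv_injective hc)
      · intro hc; exact h2 (by rw [← hc, inv_inv])
    have h5 := inv_mem (Subgroup.subset_closure (G := FreeGroup α) (Finset.mem_coe.2 hxx))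
    rwa [inv_inv] at h5

lemma swap_lemma {B : Subgroup (FreeGroup α)} {n : ℕ} {U : Finset (FreeGroup α)}
    (hU : U ∈ gsets B n) {bb z : FreeGroup α} (hb : bb ∈ U)
    (hz : z ∈ Subgroup.closure (U : Set (FreeGroup α)))
    (hrec : bb ∈ Subgroup.closure
      ((insert z ((U.erase bb).erase bb⁻¹) : Finset (FreeGroup α)) : Set (FreeGroup α)))
    (b : ℕ) (kf : α × Bool → ℕ) :
    ∃ U' ∈ gsets B n, sigmaN U' + bb.norm ≤ z.norm + sigmaN U ∧ U'.card ≤ U.card ∧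
      (sigmaN U' = sigmaN U → U'.card = U.card → z.norm = bb.norm →
        (∑ x ∈ U', mA b kf x) + mA b kf bb ≤ mA b kf z + ∑ x ∈ U, mA b kf x) := by
  classical
  set E := (U.erase bb).erase bb⁻¹ with hE
  set U' := insert z E with hU'def
  have hEsub : E ⊆ U := fun x hx =>
    Finset.mem_of_mem_erase (Finset.mem_of_mem_erase hx)
  have hclos : Subgroup.closure (U' : Set (FreeGroup α)) = B := by
    apply _root_.le_antisymm
    · rw [← hU.1]
      apply (Subgroup.closure_le _).2
      intro x hx
      rw [Finset.coe_insert, Set.mem_insert_iff] at hx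
      rcases hx with rfl | hx
      · exact hz
      · exact Subgroup.subset_closure (hEsub hx)
    · rw [← hU.1]
      apply (Subgroup.closure_le _).2
      intro x hx
      rw [Finset.mem_coe] at hx
      by_cases hxb : x = bb
      · subst hxb; exact hrec
      · by_cases hxb2 : x = bb⁻¹
        · subst hxb2
          have : bb ∈ Subgroup.closure (U' : Set (FreeGroup α)) := hrec
          simpa using inv_mem this
        · apply Subgroup.subset_closure
          rw [hU'def, Finset.coe_insert]
          right
          rw [hE]
          simp only [Finset.coe_erase, Set.mem_diff, Finset.mem_coe, Set.mem_singleton_iff]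
          exact ⟨⟨hx, hxb⟩, hxb2⟩
  have hcardE : E.card + 1 ≤ U.card := by
    have h1 : (U.erase bb).card = U.card - 1 := Finset.card_erase_of_mem hb
    have h2 : E.card ≤ (U.erase bb).card := Finset.card_le_card (Finset.erase_subset _ _)
    have h3 : 1 ≤ U.card := Finset.card_pos.2 ⟨bb, hb⟩
    omega
  have hcard : U'.card ≤ U.card := by
    have h9 : U'.card ≤ E.card + 1 := Finset.card_insert_le z E
    omega
  have hsum : ∀ f : FreeGroup α → ℕ, (∑ x ∈ U', f x) ≤ f z + ∑ x ∈ E, f x := by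
    intro f
    by_cases hzE : z ∈ E
    · rw [hU'def, Finset.insert_eq_self.2 hzE]
      omega
    · rw [hU'def, Finset.sum_insert hzE]
  have hsumE : ∀ f : FreeGroup α → ℕ, (∑ x ∈ E, f x) + f bb ≤ ∑ x ∈ U, f x := by
    intro f
    have h1 : (∑ x ∈ E, f x) ≤ ∑ x ∈ U.erase bb, f x :=
      Finset.sum_le_sum_of_subset (Finset.erase_subset _ _)
    have h2 : (∑ x ∈ U.erase bb, f x) + f bb = ∑ x ∈ U, f x :=
      Finset.sum_erase_add _ _ hb
    omega
  refine ⟨U', ⟨hclos, hcard.trans hU.2⟩, ?_, hcard, ?_⟩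
  · have := hsum FreeGroup.norm
    have := hsumE FreeGroup.norm
    rw [sigmaN, sigmaN]
    omega
  · intro hSeq hc hnz
    -- from card equality deduce z ∉ E and bb⁻¹ ∉ U.erase bb
    have hzE : z ∉ E := by
      intro hzE
      have h9 : U'.card = E.card := by
        rw [hU'def, Finset.insert_eq_self.2 hzE]
      omega
    have hcE : E.card + 1 = U.card := by
      have h9 : U'.card = E.card + 1 := Finset.card_insert_of_notMem hzE
      omega
    have hbbE : bb⁻¹ ∉ U.erase bb := by
      intro hc2
      have h1 : (U.erase bb).card = U.card - 1 := Finset.card_erase_of_mem hb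
      have h2 : E.card = (U.erase bb).card - 1 := Finset.card_erase_of_mem hc2
      have h3 : 1 ≤ U.card := Finset.card_pos.2 ⟨bb, hb⟩
      have h4 : 1 ≤ (U.erase bb).card := Finset.card_pos.2 ⟨bb⁻¹, hc2⟩
      omega
    have hEeq : E = U.erase bb := by
      rw [hE, Finset.erase_eq_of_notMem hbbE]
    have h1 : ∑ x ∈ U', mA b kf x = mA b kf z + ∑ x ∈ E, mA b kf x := by
      rw [hU'def, Finset.sum_insert hzE]
    have h2 : (∑ x ∈ E, mA b kf x) + mA b kf bb = ∑ x ∈ U, mA b kf x := by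
      rw [hEeq]
      exact Finset.sum_erase_add _ _ hb
    omega

lemma exists_min3 {β : Type*} {s : Set β} (hs : s.Nonempty) (f g h : β → ℕ) :
    ∃ x ∈ s, (∀ y ∈ s, f x ≤ f y) ∧ (∀ y ∈ s, f y = f x → g x ≤ g y) ∧
      (∀ y ∈ s, f y = f x → g y = g x → h x ≤ h y) := by
  have h1 : (f '' s).Nonempty := hs.image f
  obtain ⟨x1, hx1s, hfx1⟩ : ∃ x ∈ s, f x = sInf (f '' s) := by
    have := Nat.sInf_mem h1
    obtain ⟨x, hx, he⟩ := this
    exact ⟨x, hx, he⟩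
  set s2 : Set β := {y ∈ s | f y = sInf (f '' s)} with hs2
  have hs2ne : s2.Nonempty := ⟨x1, hx1s, hfx1⟩
  obtain ⟨x2, hx2s, hgx2⟩ : ∃ x ∈ s2, g x = sInf (g '' s2) := by
    have := Nat.sInf_mem (hs2ne.image g)
    obtain ⟨x, hx, he⟩ := this
    exact ⟨x, hx, he⟩
  set s3 : Set β := {y ∈ s2 | g y = sInf (g '' s2)} with hs3
  have hs3ne : s3.Nonempty := ⟨x2, hx2s, hgx2⟩
  obtain ⟨x3, hx3s, hhx3⟩ : ∃ x ∈ s3, h x = sInf (h '' s3) := by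
    have := Nat.sInf_mem (hs3ne.image h)
    obtain ⟨x, hx, he⟩ := this
    exact ⟨x, hx, he⟩
  obtain ⟨hx3s2, hgx3⟩ := hx3s
  obtain ⟨hx3s1, hfx3⟩ := hx3s2
  refine ⟨x3, hx3s1, ?_, ?_, ?_⟩
  · intro y hy
    rw [hfx3]
    exact Nat.sInf_le ⟨y, hy, rfl⟩
  · intro y hy hfy
    rw [hgx3]
    exact Nat.sInf_le ⟨y, ⟨hy, by rw [hfy, hfx3]⟩, rfl⟩
  · intro y hy hfy hgy
    rw [hhx3]
    refine Nat.sInf_le ⟨y, ⟨⟨hy, by rw [hfy, hfx3]⟩, by rw [hgy, hgx3]⟩, rfl⟩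

end NT

namespace NT
open FreeGroup List

variable {α : Type} [DecidableEq α]

lemma swap_sym {B : Subgroup (FreeGroup α)} {n : ℕ} {U : Finset (FreeGroup α)}
    (hU : U ∈ gsets B n) (b : ℕ) (kf : α × Bool → ℕ)
    {v z y : FreeGroup α} (hv : v ∈ symS U) (hy : y ∈ symS U)
    (hyv1 : y ≠ v) (hyv2 : y ≠ v⁻¹)
    (hz : z ∈ Subgroup.closure (U : Set (FreeGroup α)))
    (hrec : v = y * z ∨ v = z * y) :
    ∃ U' ∈ gsets B n, sigmaN U' + v.norm ≤ z.norm + sigmaN U ∧ U'.card ≤ U.card ∧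
      (sigmaN U' = sigmaN U → U'.card = U.card → z.norm = v.norm →
        (∑ x ∈ U', mA b kf x) + mA b kf v ≤ mA b kf z + ∑ x ∈ U, mA b kf x) := by
  rcases hv with hvU | hvU
  · -- v ∈ U : replace v by z
    have hyv2' : y ≠ v⁻¹⁻¹ := by rw [inv_inv]; exact hyv1
    have hyE : y ∈ Subgroup.closure (((U.erase v).erase v⁻¹ : Finset (FreeGroup α)) :
        Set (FreeGroup α)) := sym_mem_closure_eraseSym hy hyv1 hyv2
    have hmono : Subgroup.closure (((U.erase v).erase v⁻¹ : Finset (FreeGroup α)) :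
        Set (FreeGroup α)) ≤ Subgroup.closure
        ((insert z ((U.erase v).erase v⁻¹) : Finset (FreeGroup α)) : Set (FreeGroup α)) := by
      apply Subgroup.closure_mono
      rw [Finset.coe_insert]
      exact Set.subset_insert _ _
    have hzmem : z ∈ Subgroup.closure
        ((insert z ((U.erase v).erase v⁻¹) : Finset (FreeGroup α)) : Set (FreeGroup α)) := by
      apply Subgroup.subset_closure
      rw [Finset.coe_insert]
      exact Set.mem_insert _ _
    have hrec' : v ∈ Subgroup.closure
        ((insert z ((U.erase v).erase v⁻¹) : Finset (FreeGroup α)) : Set (FreeGroup α)) := by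
      rcases hrec with h | h
      · have h9 := mul_mem (hmono hyE) hzmem
        rwa [← h] at h9
      · have h9 := mul_mem hzmem (hmono hyE)
        rwa [← h] at h9
    exact swap_lemma hU hvU hz hrec' b kf
  · -- v⁻¹ ∈ U : replace v⁻¹ by z⁻¹
    have hy' : y⁻¹ ∈ symS U := inv_mem_symS hy
    have hyE : y⁻¹ ∈ Subgroup.closure (((U.erase v⁻¹).erase v⁻¹⁻¹ : Finset (FreeGroup α)) :
        Set (FreeGroup α)) := by
      apply sym_mem_closure_eraseSym hy'
      · exact fun hc => hyv1 (inv_injective hc)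
      · rw [inv_inv]
        exact fun hc => hyv2 (by rw [← hc, inv_inv])
    have hmono : Subgroup.closure (((U.erase v⁻¹).erase v⁻¹⁻¹ : Finset (FreeGroup α)) :
        Set (FreeGroup α)) ≤ Subgroup.closure
        ((insert z⁻¹ ((U.erase v⁻¹).erase v⁻¹⁻¹) : Finset (FreeGroup α)) : Set (FreeGroup α)) := by
      apply Subgroup.closure_mono
      rw [Finset.coe_insert]
      exact Set.subset_insert _ _
    have hzmem : z⁻¹ ∈ Subgroup.closure
        ((insert z⁻¹ ((U.erase v⁻¹).erase v⁻¹⁻¹) : Finset (FreeGroup α)) : Set (FreeGroup α)) := by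
      apply Subgroup.subset_closure
      rw [Finset.coe_insert]
      exact Set.mem_insert _ _
    have hrec' : v⁻¹ ∈ Subgroup.closure
        ((insert z⁻¹ ((U.erase v⁻¹).erase v⁻¹⁻¹) : Finset (FreeGroup α)) : Set (FreeGroup α)) := by
      rcases hrec with h | h
      · have h9 := mul_mem hzmem (hmono hyE)
        have h10 : v⁻¹ = z⁻¹ * y⁻¹ := by rw [h, mul_inv_rev]
        rwa [← h10] at h9
      · have h9 := mul_mem (hmono hyE) hzmem
        have h10 : v⁻¹ = y⁻¹ * z⁻¹ := by rw [h, mul_inv_rev]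
        rwa [← h10] at h9
    obtain ⟨U', hU', h1, h2, h3⟩ := swap_lemma hU hvU (inv_mem hz) hrec' b kf
    refine ⟨U', hU', ?_, h2, ?_⟩
    · rwa [FreeGroup.norm_inv_eq, FreeGroup.norm_inv_eq] at h1
    · intro ha hb hc
      have := h3 ha hb (by rw [FreeGroup.norm_inv_eq, FreeGroup.norm_inv_eq]; exact hc)
      rwa [mA_inv, mA_inv] at this

theorem nielsen_exists (S₀ : Finset (FreeGroup α)) (n : ℕ) (hcard : S₀.card ≤ n) :
    ∃ U ∈ gsets (Subgroup.closure (S₀ : Set (FreeGroup α))) n, NielsenRed U := by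
  classical
  set Λ := lettersOf S₀ with hΛ
  set bs := 2 * Λ.card + 2 with hbs
  set kf := keyF Λ with hkf
  have hbs1 : 1 ≤ bs := by omega
  set B := Subgroup.closure (S₀ : Set (FreeGroup α)) with hB
  have hgne : (gsets B n).Nonempty := ⟨S₀, rfl, hcard⟩
  obtain ⟨U, hU, hmin1, hmin2, hmin3⟩ :=
    exists_min3 hgne sigmaN Finset.card (fun V => ∑ x ∈ V, mA bs kf x)
  have hlet : ∀ x ∈ symS U, lettersIn Λ x := by
    intro x hx
    have h1 : x ∈ B := hU.1 ▸ symS_subset_closure hx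
    exact lettersIn_of_mem_closure h1
  -- N0
  have hN0 : (1 : FreeGroup α) ∉ U := by
    intro h1
    have hU' : U.erase 1 ∈ gsets B n := by
      constructor
      · apply _root_.le_antisymm
        · rw [← hU.1]
          exact Subgroup.closure_mono (by exact_mod_cast Finset.erase_subset _ _)
        · rw [← hU.1]
          apply (Subgroup.closure_le _).2
          intro x hx
          rw [Finset.mem_coe] at hx
          by_cases hx1 : x = 1
          · subst hx1; exact one_mem _
          · exact Subgroup.subset_closure (Finset.mem_erase.2 ⟨hx1, hx⟩)
      · exact le_trans (Finset.card_le_card (Finset.erase_subset _ _)) hU.2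
    have hSeq : sigmaN (U.erase 1) = sigmaN U := by
      have h2 := Finset.sum_erase_add U FreeGroup.norm h1
      have h0 : (1 : FreeGroup α).norm = 0 := FreeGroup.norm_one
      rw [sigmaN, sigmaN]
      omega
    have hcardlt : (U.erase 1).card < U.card := Finset.card_erase_lt_of_mem h1
    have := hmin2 _ hU' hSeq
    omega
  have h1sym : (1 : FreeGroup α) ∉ symS U := by
    intro hc
    rcases hc with hc | hc
    · exact hN0 hc
    · rw [inv_one] at hc; exact hN0 hc
  -- N1
  have hN1s : ∀ u ∈ symS U, ∀ v ∈ symS U, u * v ≠ 1 → u ≠ v → v.norm ≤ (u * v).norm := by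
    intro u hu v hv huv hne'
    by_contra hlt
    push_neg at hlt
    have huv2 : u ≠ v⁻¹ := fun hc => huv (by rw [hc, inv_mul_cancel])
    have hy1 : u⁻¹ ≠ v := fun hc => huv2 (by rw [← hc, inv_inv])
    have hy2 : u⁻¹ ≠ v⁻¹ := fun hc => hne' (inv_injective hc)
    obtain ⟨U', hU', hSle, hcle, _⟩ := swap_sym hU bs kf hv (inv_mem_symS hu) hy1 hy2
      (mul_mem (symS_subset_closure hu) (symS_subset_closure hv))
      (Or.inl (by group))
    have := hmin1 U' hU'
    omega
  have hN1 : ∀ u ∈ symS U, ∀ v ∈ symS U, u * v ≠ 1 → u ≠ v →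
      v.norm ≤ (u * v).norm ∧ u.norm ≤ (u * v).norm := by
    intro u hu v hv huv hne'
    refine ⟨hN1s u hu v hv huv hne', ?_⟩
    have h2 := hN1s v⁻¹ (inv_mem_symS hv) u⁻¹ (inv_mem_symS hu)
      (fun hc => huv (by rw [← mul_inv_rev] at hc; exact inv_eq_one.1 hc))
      (fun hc => hne' (inv_injective hc).symm)
    rwa [← mul_inv_rev, FreeGroup.norm_inv_eq, FreeGroup.norm_inv_eq] at h2
  have hpcb : ∀ u ∈ symS U, ∀ v ∈ symS U, u * v ≠ 1 → ∀ d : ℕ,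
      u.norm + v.norm = (u * v).norm + 2 * d → 2 * d ≤ u.norm ∧ 2 * d ≤ v.norm := by
    intro u hu v hv huv d hd
    by_cases he : u = v
    · subst he
      have := norm_le_norm_mul_self u
      omega
    · have := hN1 u hu v hv huv he
      omega
  -- N2
  have hN2 : ∀ u ∈ symS U, ∀ v ∈ symS U, ∀ w ∈ symS U, u * v ≠ 1 → v * w ≠ 1 →
      u.norm + w.norm < (u * v).norm + (v * w).norm := by
    intro u hu v hv w hw huv hvw
    by_contra hle
    push_neg at hle
    obtain ⟨d₁, P₁, hd₁, hdec₁, hmul₁, hlen₁, hnorm₁, hj₁⟩ := exists_pc u v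
    obtain ⟨d₂, P₂, hd₂, hdec₂, hmul₂, hlen₂, hnorm₂, hj₂⟩ := exists_pc v w
    have hbd1 := hpcb u hu v hv huv d₁ hnorm₁
    have hbd2 := hpcb v hv w hw hvw d₂ hnorm₂
    have hv2k : v.norm = 2 * d₁ := by omega
    have hd21 : d₂ = d₁ := by omega
    subst hd21
    set k := d₂ with hkdef
    have hvne1 : v ≠ 1 := fun hc => h1sym (hc ▸ hv)
    have hk1 : 1 ≤ k := by
      have : v.norm ≠ 0 := fun h0 => hvne1 (FreeGroup.norm_eq_zero.1 h0)
      omega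
    have hVlen : v.toWord.length = 2 * k := hv2k
    have hP₂len : P₂.length = k := by omega
    have hl_def : P₂ = v.toWord.take k := by
      rw [hdec₂, ← hP₂len, List.take_left]
    have hr_def : v.toWord.drop k = invRev (w.toWord.take k) := by
      rw [hdec₂, ← hP₂len, List.drop_left]
    set l := v.toWord.take k with hldef
    set r := v.toWord.drop k with hrdef
    clear_value l r
    have huP₁ : u.norm = P₁.length + k := hlen₁
    have h2ku : 2 * k ≤ u.norm := hbd1.1
    have h2kw : 2 * k ≤ w.norm := hbd2.2
    have hwpre : w.toWord.take k = invRev r := by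
      rw [hr_def, invRev_invRev]
    have hrlen : r.length = k := by
      rw [hrdef, List.length_drop]
      omega
    have hllen : l.length = k := by
      rw [hldef, List.length_take]
      omega
    have hirlen : (invRev r).length = k := by
      rw [length_invRev']
      exact hrlen
    have hVsplit : v.toWord = l ++ r := by
      rw [hldef, hrdef, List.take_append_drop]
    have hlr : l ≠ invRev r := by
      intro he
      obtain ⟨rh, rt, hrt⟩ : ∃ rh rt, r = rh :: rt := by
        cases hrc : r with
        | nil => rw [hrc] at hrlen; simp at hrlen; omega
        | cons a t => exact ⟨a, t, rfl⟩
      have hVred := reduced_toWord v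
      rw [hVsplit, he, hrt, invRev_cons] at hVred
      have hmid : Reduced [flipL rh, rh] := hVred.infix ⟨invRev rt, rt, by simp⟩
      rw [Reduced, List.Chain', List.isChain_pair] at hmid
      exact hmid (by rw [flipL_flipL])
    have hneuv : u ≠ v := by
      intro he
      apply hlr
      have hP₁len : P₁.length = k := by
        rw [he] at huP₁
        omega
      have h10 : v.toWord = P₁ ++ invRev l := by
        rw [← he]
        exact hdec₁
      have h9 : r = invRev l := by
        rw [hrdef, h10, ← hP₁len, List.drop_left]
      rw [h9, invRev_invRev]
    have hnewv : w ≠ v := by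
      intro he
      apply hlr
      rw [← hwpre, he]
      exact hldef
    have hnuv2 : u ≠ v⁻¹ := fun hc => huv (by rw [hc, inv_mul_cancel])
    have hnwv2 : w ≠ v⁻¹ := fun hc => hvw (by rw [hc, mul_inv_cancel])
    -- first difference
    have hex : ∃ j : ℕ, l[j]? ≠ (invRev r)[j]? := by
      by_contra hno
      push_neg at hno
      exact hlr (List.ext_getElem? hno)
    have hjk : Nat.find hex < k := by
      by_contra hge
      push_neg at hge
      apply Nat.find_spec hex
      rw [List.getElem?_eq_none (by omega), List.getElem?_eq_none (by omega)]
    set j := Nat.find hex with hjdef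
    have hjl : j < l.length := by omega
    have hjr : j < (invRev r).length := by omega
    have hpre : l.take j = (invRev r).take j := by
      apply List.ext_getElem?
      intro i
      rw [List.getElem?_take, List.getElem?_take]
      split_ifs with hij
      · exact not_not.1 (Nat.find_min hex hij)
      · rfl
    have hxne : l[j]'hjl ≠ (invRev r)[j]'hjr := by
      intro he
      apply Nat.find_spec hex
      rw [List.getElem?_eq_getElem hjl, List.getElem?_eq_getElem hjr, he]
    have hlvltr : ∀ p ∈ l, p.1 ∈ Λ := fun p hp => hlet v hv p
      (by rw [hldef] at hp; exact List.mem_of_mem_take hp)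
    have hrltr : ∀ p ∈ r, p.1 ∈ Λ := fun p hp => hlet v hv p
      (by rw [hrdef] at hp; exact List.mem_of_mem_drop hp)
    have hirltr : ∀ p ∈ invRev r, p.1 ∈ Λ := lettersIn_invRev hrltr
    have hkne : kf (l[j]'hjl) ≠ kf ((invRev r)[j]'hjr) := by
      intro he
      exact hxne (keyF_inj Λ (hlvltr _ (List.getElem_mem _)) (hirltr _ (List.getElem_mem _)) he)
    have hP₁sub : ∀ p ∈ P₁, p.1 ∈ Λ := by
      intro p hp
      apply hlet u hu p
      rw [hdec₁]
      exact List.mem_append_left _ hp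
    have hirP₁ : ∀ p ∈ invRev P₁, p.1 ∈ Λ := lettersIn_invRev hP₁sub
    have htsub : ∀ p ∈ w.toWord.drop k, p.1 ∈ Λ := fun p hp =>
      hlet w hw p (List.mem_of_mem_drop hp)
    rcases lt_or_gt_of_ne hkne with hklt | hkgt
    · -- M2 : replace w by z = v * w
      set z := v * w with hzdef
      set t := w.toWord.drop k with htdef
      have hznorm : z.norm = w.norm := by omega
      have hztoW : z.toWord = l ++ t := by
        rw [hmul₂, hl_def]
      have hwdec : w.toWord = invRev r ++ t := by
        rw [← hwpre]
        exact (List.take_append_drop k w.toWord).symm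
      have htlen : t.length + k = w.norm := by
        rw [htdef, List.length_drop]
        have : k ≤ w.toWord.length := by
          rw [← norm_def]; omega
        rw [← norm_def]
        omega
      have hmAlt : mA bs kf z < mA bs kf w := by
        rw [mA, mA]
        have hinv_eq : halfW z⁻¹ = halfW w⁻¹ := by
          have hwinv : w⁻¹.toWord = invRev t ++ r := by
            rw [FreeGroup.toWord_inv, hwdec, invRev_append', invRev_invRev]
          have hzinv : z⁻¹.toWord = invRev t ++ invRev l := by
            rw [FreeGroup.toWord_inv, hztoW, invRev_append']
          have hzn' : z⁻¹.norm = w⁻¹.norm := by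
            rw [FreeGroup.norm_inv_eq, FreeGroup.norm_inv_eq, hznorm]
          rw [halfW, halfW, hzinv, hwinv, hzn']
          have hle2 : (w⁻¹.norm + 1) / 2 ≤ (invRev t).length := by
            rw [length_invRev', FreeGroup.norm_inv_eq]
            omega
          rw [List.take_append_of_le_length hle2, List.take_append_of_le_length hle2]
        rw [hinv_eq]
        apply Nat.add_lt_add_right
        -- halfW z < halfW w
        have hh : k ≤ (w.norm + 1) / 2 := by omega
        have e1 : halfW z = l ++ t.take ((w.norm + 1) / 2 - k) := by
          rw [halfW, hztoW, hznorm, List.take_append,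
            List.take_of_length_le (by omega), hllen]
        have e2 : halfW w = invRev r ++ t.take ((w.norm + 1) / 2 - k) := by
          rw [halfW, hwdec, List.take_append,
            List.take_of_length_le (by omega), hirlen]
        rw [e1, e2]
        refine wval_firstdiff bs kf hbs1 _ _ _ _ k j hllen hirlen rfl hjk hpre hklt ?_ ?_
        · intro p hp; exact keyF_lt Λ (hlvltr p hp)
        · intro p hp; exact keyF_lt Λ (htsub p (List.mem_of_mem_take hp))
      -- swap move
      have hzcl : z ∈ Subgroup.closure (U : Set (FreeGroup α)) :=
        mul_mem (symS_subset_closure hv) (symS_subset_closure hw)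
      have hy1 : v⁻¹ ≠ w := fun hc => hnwv2 hc.symm
      have hy2 : v⁻¹ ≠ w⁻¹ := fun hc => hnewv (inv_injective hc).symm
      obtain ⟨U', hU', hSle, hcle, hfine⟩ := swap_sym hU bs kf hw (inv_mem_symS hv) hy1 hy2
        hzcl (Or.inl (by rw [hzdef]; group))
      have hs1 := hmin1 U' hU'
      have hSeq2 : sigmaN U' = sigmaN U := by omega
      have hc1 := hmin2 U' hU' hSeq2
      have hceq : U'.card = U.card := _root_.le_antisymm hcle hc1
      have hmu := hfine hSeq2 hceq hznorm
      have hmu1 := hmin3 U' hU' hSeq2 hceq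
      omega
    · -- M1 : replace u by z = u * v
      set z := u * v with hzdef
      have hznorm : z.norm = u.norm := by omega
      have hztoW : z.toWord = P₁ ++ r := hmul₁
      have hkP₁ : P₁.length = u.norm - k := by omega
      have hmAlt : mA bs kf z < mA bs kf u := by
        rw [mA, mA]
        have hhalf_eq : halfW z = halfW u := by
          rw [halfW, halfW, hztoW, hdec₁, hznorm]
          rw [List.take_append_of_le_length (by omega), List.take_append_of_le_length (by omega)]
        rw [hhalf_eq]
        apply Nat.add_lt_add_left
        have huinv : u⁻¹.toWord = l ++ invRev P₁ := by
          rw [FreeGroup.toWord_inv, hdec₁, invRev_append', invRev_invRev]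
        have hzinv : z⁻¹.toWord = invRev r ++ invRev P₁ := by
          rw [FreeGroup.toWord_inv, hztoW, invRev_append']
        have hzn' : z⁻¹.norm = u⁻¹.norm := by
          rw [FreeGroup.norm_inv_eq, FreeGroup.norm_inv_eq, hznorm]
        have hkh : k ≤ (u⁻¹.norm + 1) / 2 := by
          rw [FreeGroup.norm_inv_eq]
          omega
        have e1 : halfW z⁻¹ = invRev r ++ (invRev P₁).take ((u⁻¹.norm + 1) / 2 - k) := by
          rw [halfW, hzn', hzinv, List.take_append,
            List.take_of_length_le (by omega), hirlen]
        have e2 : halfW u⁻¹ = l ++ (invRev P₁).take ((u⁻¹.norm + 1) / 2 - k) := by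
          rw [halfW, huinv, List.take_append,
            List.take_of_length_le (by omega), hllen]
        rw [e1, e2]
        refine wval_firstdiff bs kf hbs1 _ _ _ _ k j hirlen hllen rfl hjk hpre.symm hkgt ?_ ?_
        · intro p hp; exact keyF_lt Λ (hirltr p hp)
        · intro p hp; exact keyF_lt Λ (hirP₁ p (List.mem_of_mem_take hp))
      have hzcl : z ∈ Subgroup.closure (U : Set (FreeGroup α)) :=
        mul_mem (symS_subset_closure hu) (symS_subset_closure hv)
      have hy1 : v⁻¹ ≠ u := fun hc => hnuv2 hc.symm
      have hy2 : v⁻¹ ≠ u⁻¹ := fun hc => hneuv (inv_injective hc).symm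
      obtain ⟨U', hU', hSle, hcle, hfine⟩ := swap_sym hU bs kf hu (inv_mem_symS hv) hy1 hy2
        hzcl (Or.inr (by rw [hzdef]; group))
      have hs1 := hmin1 U' hU'
      have hSeq2 : sigmaN U' = sigmaN U := by omega
      have hc1 := hmin2 U' hU' hSeq2
      have hceq : U'.card = U.card := _root_.le_antisymm hcle hc1
      have hmu := hfine hSeq2 hceq hznorm
      have hmu1 := hmin3 U' hU' hSeq2 hceq
      omega
  exact ⟨U, hU, ⟨hN0, hN1, hN2⟩⟩

end NT

namespace NT
open FreeGroup List

variable {α : Type} [DecidableEq α]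

lemma finite_words (Λ : Finset α) : ∀ L : ℕ,
    {w : Wrd α | w.length ≤ L ∧ ∀ p ∈ w, p.1 ∈ Λ}.Finite := by
  intro L
  induction L with
  | zero =>
    apply Set.Finite.subset (Set.finite_singleton ([] : Wrd α))
    rintro w ⟨hw, -⟩
    rw [Nat.le_zero, List.length_eq_zero_iff] at hw
    simp [hw]
  | succ L ih =>
    have hP : ((Λ : Set α) ×ˢ (Set.univ : Set Bool)).Finite :=
      (Λ.finite_toSet).prod Set.finite_univ
    apply Set.Finite.subset ((Set.finite_singleton ([] : Wrd α)).union
      (Set.Finite.image2 (fun p w => p :: w) hP ih))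
    rintro w ⟨hw, hl⟩
    cases w with
    | nil => exact Or.inl rfl
    | cons p t =>
      refine Or.inr (Set.mem_image2.2 ⟨p, ⟨hl p (List.mem_cons_self), Set.mem_univ _⟩,
        t, ⟨?_, fun q hq => hl q (List.mem_cons_of_mem _ hq)⟩, rfl⟩)
      simpa using Nat.le_of_succ_le_succ hw

lemma finite_norm_le (Λ : Finset α) (L : ℕ) :
    {x : FreeGroup α | x.norm ≤ L ∧ lettersIn Λ x}.Finite := by
  apply Set.Finite.of_finite_image (f := FreeGroup.toWord)
  · apply Set.Finite.subset (finite_words Λ L)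
    rintro w ⟨x, ⟨hx1, hx2⟩, rfl⟩
    exact ⟨hx1, hx2⟩
  · exact FreeGroup.toWord_injective.injOn

lemma finite_finsets_of_subset {s : Set (FreeGroup α)} (hs : s.Finite) :
    {V : Finset (FreeGroup α) | ↑V ⊆ s}.Finite := by
  apply Set.Finite.of_finite_image (f := fun V : Finset (FreeGroup α) => (V : Set (FreeGroup α)))
  · apply Set.Finite.subset hs.finite_subsets
    rintro t ⟨V, hV, rfl⟩
    exact hV
  · exact Finset.coe_injective.injOn

lemma ultra_const {β : Type*} (u : Ultrafilter ℕ) (f : ℕ → β) (hfin : (Set.range f).Finite) :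
    ∃ b, {m | f m = b} ∈ u := by
  by_contra hno
  push_neg at hno
  have h1 : ∀ b, {m | f m = b}ᶜ ∈ u := fun b => Ultrafilter.compl_mem_iff_notMem.2 (hno b)
  have h2 : (⋂ b ∈ Set.range f, {m | f m = b}ᶜ) ∈ u :=
    (Filter.biInter_mem hfin).2 fun b _ => h1 b
  obtain ⟨m, hm⟩ := Filter.nonempty_of_mem h2
  rw [Set.mem_iInter₂] at hm
  exact hm (f m) ⟨m, rfl⟩ rfl

theorem takahasi (Bs : ℕ → Subgroup (FreeGroup α)) (hdesc : ∀ m, Bs (m + 1) ≤ Bs m)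
    (n : ℕ) (h : ∀ m, rkLe (Bs m) n) : rkLe (⨅ m, Bs m) n := by
  classical
  have hmono : ∀ m m', m ≤ m' → Bs m' ≤ Bs m := by
    intro m m' hmm
    induction hmm with
    | refl => exact le_rfl
    | step _ ih => exact le_trans (hdesc _) ih
  obtain ⟨S₀, hS₀card, hS₀⟩ := h 0
  set Λ := lettersOf S₀ with hΛ
  have hU : ∀ m, ∃ U ∈ gsets (Bs m) n, NielsenRed U := by
    intro m
    obtain ⟨S, hScard, hS⟩ := h m
    obtain ⟨U, hU1, hU2⟩ := nielsen_exists S n hScard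
    rw [hS] at hU1
    exact ⟨U, hU1, hU2⟩
  choose Us hUs hNR using hU
  have hUsub : ∀ m, ∀ x ∈ Us m, x ∈ Bs m := by
    intro m x hx
    exact (hUs m).1 ▸ Subgroup.subset_closure hx
  have hlet : ∀ m, ∀ x ∈ Us m, lettersIn Λ x := by
    intro m x hx
    have h1 : x ∈ Bs 0 := hmono 0 m (Nat.zero_le m) (hUsub m x hx)
    rw [← hS₀] at h1
    exact lettersIn_of_mem_closure h1
  set uF := Filter.hyperfilter ℕ with huF
  set g : ℕ → ℕ → Finset (FreeGroup α) := fun L m => (Us m).filter (fun x => x.norm ≤ L)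
    with hg
  have hrange : ∀ L, (Set.range (g L)).Finite := by
    intro L
    apply Set.Finite.subset (finite_finsets_of_subset (finite_norm_le Λ L))
    rintro V ⟨m, rfl⟩
    intro x hx
    simp only [hg, Finset.mem_coe, Finset.mem_filter] at hx
    exact ⟨hx.2, hlet m x hx.1⟩
  choose WL hWL using fun L => ultra_const uF (g L) (hrange L)
  have hWmono : ∀ L, WL L ⊆ WL (L + 1) := by
    intro L
    obtain ⟨m, hm1, hm2⟩ := Filter.nonempty_of_mem (Filter.inter_mem (hWL L) (hWL (L + 1)))
    rw [Set.mem_setOf_eq] at hm1 hm2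
    rw [← hm1, ← hm2]
    intro x hx
    simp only [hg, Finset.mem_filter] at hx ⊢
    exact ⟨hx.1, hx.2.trans (Nat.le_succ L)⟩
  have hWmono' : ∀ L L', L ≤ L' → WL L ⊆ WL L' := by
    intro L L' hLL
    induction hLL with
    | refl => exact fun _ hx => hx
    | step _ ih => exact fun x hx => hWmono _ (ih hx)
  have hWcard : ∀ L, (WL L).card ≤ n := by
    intro L
    obtain ⟨m, hm⟩ := Filter.nonempty_of_mem (hWL L)
    rw [Set.mem_setOf_eq] at hm
    rw [← hm]
    simp only [hg]
    exact le_trans (Finset.card_filter_le _ _) (hUs m).2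
  have hWsub : ∀ L, ∀ x ∈ WL L, x ∈ ⨅ m, Bs m := by
    intro L x hx
    rw [Subgroup.mem_iInf]
    intro m₀
    have hinf : {m | g L m = WL L}.Infinite := by
      by_contra hfin
      rw [Set.not_infinite] at hfin
      exact Filter.notMem_hyperfilter_of_finite hfin (hWL L)
    obtain ⟨m, hm, hlt⟩ := hinf.exists_gt m₀
    have hx' : x ∈ Us m := by
      have h9 : x ∈ g L m := by rw [Set.mem_setOf_eq.mp hm]; exact hx
      simp only [hg, Finset.mem_filter] at h9
      exact h9.1
    exact hmono m₀ m (le_of_lt hlt) (hUsub m x hx')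
  obtain ⟨L₀, hL₀⟩ : ∃ L₀, ∀ L, L₀ ≤ L → WL L = WL L₀ := by
    have hfinv : (Set.range fun L => (WL L).card).Finite := by
      apply Set.Finite.subset (Set.finite_Icc 0 n)
      rintro _ ⟨L, rfl⟩
      exact ⟨Nat.zero_le _, hWcard L⟩
    obtain ⟨c, ⟨L₀, hL₀c⟩, hcmax⟩ :=
      hfinv.exists_maximalFor id _ ⟨(WL 0).card, 0, rfl⟩
    simp only [id_eq] at hcmax
    simp only at hL₀c
    refine ⟨L₀, fun L hL => ?_⟩
    have hsub := hWmono' L₀ L hL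
    have hcle : c ≤ (WL L).card := by
      rw [← hL₀c]
      exact Finset.card_le_card hsub
    have hceq : c = (WL L).card := _root_.le_antisymm hcle (hcmax ⟨L, rfl⟩ hcle)
    refine (Finset.eq_of_subset_of_card_le hsub ?_).symm
    rw [← hceq, ← hL₀c]
  refine ⟨WL L₀, hWcard L₀, ?_⟩
  apply _root_.le_antisymm
  · apply (Subgroup.closure_le _).2
    intro x hx
    exact hWsub L₀ x hx
  · intro x hx
    have hxm : ∀ m, x ∈ Bs m := Subgroup.mem_iInf.1 hx
    set L := max x.norm L₀ with hLdef
    obtain ⟨m, hm⟩ := Filter.nonempty_of_mem (hWL L)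
    rw [Set.mem_setOf_eq] at hm
    have hgood := (hNR m).good (x := x) (by rw [(hUs m).1]; exact hxm m)
    have hsub2 : {u : FreeGroup α | u ∈ Us m ∧ u.norm ≤ x.norm} ⊆ ((g L m : Finset _) : Set _) := by
      intro y hy
      simp only [hg, Finset.mem_coe, Finset.mem_filter]
      exact ⟨hy.1, le_trans hy.2 (le_max_left _ _)⟩
    have h5 := Subgroup.closure_mono hsub2 hgood
    rw [hm, hL₀ L (le_max_right _ _)] at h5
    exact h5

end NT


/-- a countable intersection of inert subgroups of a free group is inert. -/
theorem stmt_5 {α : Type} (A : ℕ → Subgroup (FreeGroup α))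
    (hA : ∀ i, Inert (A i)) : Inert (⨅ i, A i) := by
  classical
  intro K n hK
  letI : DecidableEq α := Classical.decEq α
  set Bs : ℕ → Subgroup (FreeGroup α) := fun m => (⨅ i ∈ Finset.range (m + 1), A i) ⊓ K
    with hBs
  have hB0 : Bs 0 = A 0 ⊓ K := by
    simp [hBs]
  have hstep : ∀ m, Bs (m + 1) = A (m + 1) ⊓ Bs m := by
    intro m
    simp only [hBs]
    rw [Finset.range_add_one, Finset.iInf_insert, inf_assoc]
  have hdesc : ∀ m, Bs (m + 1) ≤ Bs m := by
    intro m
    rw [hstep]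
    exact inf_le_right
  have hrk : ∀ m, rkLe (Bs m) n := by
    intro m
    induction m with
    | zero => rw [hB0]; exact hA 0 K n hK
    | succ m ih => rw [hstep]; exact hA (m + 1) (Bs m) n ih
  have htak := NT.takahasi Bs hdesc n hrk
  have hinf : (⨅ m, Bs m) = (⨅ i, A i) ⊓ K := by
    apply le_antisymm
    · apply le_inf
      · apply le_iInf
        intro i
        refine le_trans (iInf_le _ i) ?_
        simp only [hBs]
        refine le_trans inf_le_left ?_
        exact iInf₂_le i (Finset.mem_range.2 (Nat.lt_succ_self i))
      · exact le_trans (iInf_le _ 0) inf_le_right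
    · apply le_iInf
      intro m
      simp only [hBs]
      apply le_inf
      · apply le_iInf₂
        intro j _
        exact le_trans inf_le_left (iInf_le _ j)
      · exact inf_le_right
  rw [hinf] at htak
  exact htak
end

section
/- Inertness is transitive: if A ≤ B ≤ C are free groups with A inert in B and B inert in C, then A is inert in C. -/
/-- `A` is inert in the subgroup `B`: `rk(A ∩ K) ≤ rk(K)` for every subgroup `K ≤ B`. -/
def InertIn {G : Type*} [Group G] (A B : Subgroup G) : Prop :=
  ∀ K : Subgroup G, K ≤ B → ∀ n : ℕ, rkLe K n → rkLe (A ⊓ K) n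

/-- inertness is transitive: if `A ≤ B ≤ C` with `A` inert in `B` and `B`
inert in `C`, then `A` is inert in `C`. (Here `C = FreeGroup γ` is the ambient group.) -/
theorem stmt_6 {γ : Type} (A B : Subgroup (FreeGroup γ)) (hAB : A ≤ B)
    (h1 : InertIn A B) (h2 : Inert B) : Inert A := by
  intro K n hK
  have hBK := h2 K n hK
  have := h1 (B ⊓ K) inf_le_left n hBK
  have heq : A ⊓ (B ⊓ K) = A ⊓ K := by
    rw [← inf_assoc, inf_eq_left.mpr hAB]
  rwa [heq] at this
end

section
/- Let F be a free group and x, y ∈ F with x^n = y^n for some n ≥ 1. Then x = y. -/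
set_option linter.unusedSectionVars false
set_option linter.unusedVariables false

namespace UniqueRoots
open List FreeGroup

variable {α : Type} [DecidableEq α]

/-- No cancellation between two adjacent letters. -/
def R : (α × Bool) → (α × Bool) → Prop := fun x y => ¬(x.1 = y.1 ∧ x.2 = !y.2)

/-- A reduced word. -/
def Reduced (L : List (α × Bool)) : Prop := List.Chain' R L

/-- A cyclically reduced word. -/
def CR (L : List (α × Bool)) : Prop :=
  Reduced L ∧ ∀ x ∈ L.getLast?, ∀ y ∈ L.head?, R x y

lemma reduce_eq_self {L : List (α × Bool)} (h : Reduced L) : FreeGroup.reduce L = L := by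
  induction L with
  | nil => rfl
  | cons x L ih =>
    have hL : Reduced L := (List.isChain_cons.mp h).2
    rw [FreeGroup.reduce.cons, ih hL]
    cases L with
    | nil => rfl
    | cons y M =>
      have : R x y := (List.isChain_cons_cons.mp h).1
      simp only [R] at this
      simp [this]

lemma reduced_reduce (L : List (α × Bool)) : Reduced (FreeGroup.reduce L) := by
  induction L with
  | nil => exact List.isChain_nil
  | cons x L ih =>
    rw [FreeGroup.reduce.cons]
    rcases h : FreeGroup.reduce L with _ | ⟨y, M⟩
    · exact List.isChain_singleton x
    · rw [h] at ih
      by_cases hc : x.1 = y.1 ∧ x.2 = !y.2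
      · simp only [hc, if_true]
        exact (List.isChain_cons.mp ih).2
      · simp only [hc, if_false]
        exact List.isChain_cons_cons.mpr ⟨hc, ih⟩

lemma reduced_toWord (x : FreeGroup α) : Reduced x.toWord := by
  have := reduced_reduce x.toWord
  rwa [FreeGroup.reduce_toWord] at this

lemma toWord_mk_of_reduced {L : List (α × Bool)} (h : Reduced L) :
    (FreeGroup.mk L).toWord = L := by
  rw [FreeGroup.toWord_mk, reduce_eq_self h]


def npow (n : ℕ) (L : List (α × Bool)) : List (α × Bool) := (List.replicate n L).flatten

lemma npow_succ (n : ℕ) (L : List (α × Bool)) : npow (n+1) L = L ++ npow n L := by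
  simp [npow, List.replicate_succ]

lemma npow_length (n : ℕ) (L : List (α × Bool)) : (npow n L).length = n * L.length := by
  induction n with
  | zero => simp [npow]
  | succ n ih => rw [npow_succ]; simp [ih]; ring

lemma head?_npow {L : List (α × Bool)} (hL : L ≠ []) {n : ℕ} (hn : 1 ≤ n) :
    (npow n L).head? = L.head? := by
  obtain ⟨m, rfl⟩ := Nat.exists_eq_add_of_le hn
  rw [Nat.add_comm, npow_succ, List.head?_append]
  cases h : L.head? with
  | none => exact absurd (List.head?_eq_none_iff.mp h) hL
  | some a => rfl

lemma getLast?_npow {L : List (α × Bool)} (hL : L ≠ []) {n : ℕ} (hn : 1 ≤ n) :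
    (npow n L).getLast? = L.getLast? := by
  induction n with
  | zero => omega
  | succ n ih =>
    rw [npow_succ]
    rcases Nat.eq_or_lt_of_le (Nat.zero_le n) with h | h
    · simp [npow, ← h]
    · rw [List.getLast?_append_of_ne_nil, ih h]
      intro hne
      have := npow_length n L
      rw [hne] at this
      simp at this
      rcases this with h' | h'
      · omega
      · exact hL h'

lemma CR_npow {L : List (α × Bool)} (h : CR L) (n : ℕ) : CR (npow n L) := by
  rcases eq_or_ne L [] with rfl | hL
  · constructor
    · have : npow n ([] : List (α × Bool)) = [] := by
        apply List.length_eq_zero_iff.mp; simp [npow_length]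
      rw [this]; exact List.isChain_nil
    · intro x hx
      have : npow n ([] : List (α × Bool)) = [] := by
        apply List.length_eq_zero_iff.mp; simp [npow_length]
      rw [this] at hx; simp at hx
  induction n with
  | zero => exact ⟨List.isChain_nil, by simp [npow]⟩
  | succ n ih =>
    rcases Nat.eq_or_lt_of_le (Nat.zero_le n) with h0 | h0
    · subst h0
      constructor
      · rw [npow_succ]; simpa [npow] using h.1
      · rw [npow_succ]; simp only [npow, List.replicate_zero, List.flatten_nil, List.append_nil]
        exact h.2
    · constructor
      · rw [npow_succ]
        refine List.isChain_append.mpr ⟨h.1, ih.1, ?_⟩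
        intro x hx y hy
        rw [head?_npow hL h0] at hy
        exact h.2 x hx y hy
      · rw [npow_succ]
        intro x hx y hy
        rw [List.getLast?_append_of_ne_nil] at hx
        · rw [getLast?_npow hL h0] at hx
          rw [List.head?_append] at hy
          cases hh : L.head? with
          | none => exact absurd (List.head?_eq_none_iff.mp hh) hL
          | some a =>
            rw [hh] at hy; simp at hy; subst hy
            exact h.2 x hx a hh
        · intro hne
          have := npow_length n L
          rw [hne] at this; simp at this
          rcases this with h' | h'
          · omega
          · exact hL h'


lemma invRev_append (L M : List (α × Bool)) :
    FreeGroup.invRev (L ++ M) = FreeGroup.invRev M ++ FreeGroup.invRev L := by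
  simp [FreeGroup.invRev]


lemma decomp (x : FreeGroup α) : ∃ c u : FreeGroup α, x = c * u * c⁻¹ ∧ CR u.toWord ∧
    x.toWord = c.toWord ++ u.toWord ++ (c⁻¹).toWord := by
  generalize h : x.toWord.length = N
  induction N using Nat.strong_induction_on generalizing x with
  | _ N ih =>
  by_cases hcr : CR x.toWord
  · exact ⟨1, x, by group, hcr, by simp⟩
  · simp only [CR, not_and] at hcr
    have hred := reduced_toWord x
    obtain ⟨w, hw, z, hz, hwz⟩ := by
      have := hcr hred
      push_neg at this
      exact this
    simp only [R, not_not] at hwz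
    obtain ⟨L, hL⟩ : ∃ L, x.toWord = L := ⟨_, rfl⟩
    rw [hL] at hred hw hz h
    have hLne : L ≠ [] := by rintro rfl; simp at hz
    rcases L with _ | ⟨a, T⟩
    · simp at hz
    have hza : z = a := (by simpa using hz : a = z).symm
    subst hza
    have htne : T ≠ [] := by
      rintro rfl
      have hw' : z = w := by simpa using hw
      rw [← hw'] at hwz
      exact absurd hwz.2 (by simp)
    set M := T.dropLast with hM
    have htail : T = M ++ [T.getLast htne] := (List.dropLast_concat_getLast htne).symm
    have hgw : T.getLast htne = w := by
      have h1 : (z :: T).getLast? = some w := hw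
      rw [show z :: T = (z :: M) ++ [T.getLast htne] by rw [List.cons_append, ← htail]] at h1
      rw [List.getLast?_append_of_ne_nil _ (by simp)] at h1
      simpa using h1
    rw [hgw] at htail
    have hLdecomp : z :: T = z :: (M ++ [w]) := by rw [← htail]
    have hwz' : w = (z.1, !z.2) := by
      ext
      · exact hwz.1
      · exact hwz.2
    have hMred : Reduced M := by
      have : M <:+: z :: T := ⟨[z], [w], by rw [hLdecomp]; simp⟩
      exact List.IsChain.infix hred this
    have hMlen : M.length + 2 = N := by
      have h2 := congrArg List.length htail
      simp at h2 h
      omega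
    have hMword : (FreeGroup.mk M).toWord = M := toWord_mk_of_reduced hMred
    obtain ⟨c₀, u, hdec, hcru, hword⟩ := ih M.length (by omega) (FreeGroup.mk M) (by rw [hMword])
    rw [hMword] at hword
    refine ⟨FreeGroup.mk [z] * c₀, u, ?_, hcru, ?_⟩
    · have hx : x = FreeGroup.mk (z :: T) := by rw [← hL, FreeGroup.mk_toWord]
      have hc1inv : (FreeGroup.mk [z])⁻¹ = FreeGroup.mk [w] := by
        rw [FreeGroup.inv_mk]
        congr 1
        simp [FreeGroup.invRev, hwz']
      have hx2 : x = FreeGroup.mk [z] * FreeGroup.mk M * (FreeGroup.mk [z])⁻¹ := by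
        rw [hc1inv, hx, hLdecomp]
        simp [FreeGroup.mul_mk]
      rw [hx2, hdec]
      group
    · have hCred : Reduced ([z] ++ c₀.toWord) := by
        have hpref : [z] ++ c₀.toWord <+: z :: T := by
          rw [hLdecomp, hword]
          exact ⟨u.toWord ++ (c₀⁻¹).toWord ++ [w], by simp⟩
        exact List.IsChain.prefix hred hpref
      have hc : (FreeGroup.mk [z] * c₀).toWord = [z] ++ c₀.toWord := by
        conv_lhs => rw [← FreeGroup.mk_toWord (x := c₀)]
        rw [FreeGroup.mul_mk]
        exact toWord_mk_of_reduced hCred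
      have hcinv : ((FreeGroup.mk [z] * c₀)⁻¹).toWord
          = (c₀⁻¹).toWord ++ [w] := by
        rw [FreeGroup.toWord_inv, hc, invRev_append, FreeGroup.toWord_inv]
        congr 1
        simp [FreeGroup.invRev, hwz']
      rw [hL, hc, hcinv, hLdecomp, hword]
      simp

lemma toWord_pow {u : FreeGroup α} (h : CR u.toWord) (n : ℕ) :
    (u ^ n).toWord = npow n u.toWord := by
  conv_lhs => rw [← FreeGroup.mk_toWord (x := u)]
  rw [FreeGroup.pow_mk]
  exact toWord_mk_of_reduced (CR_npow h n).1

lemma npow_ne_nil {U : List (α × Bool)} (hU : U ≠ []) {n : ℕ} (hn : 1 ≤ n) :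
    npow n U ≠ [] := by
  intro h
  have := npow_length n U
  rw [h] at this
  simp at this
  rcases this with h' | h'
  · omega
  · exact hU h'

lemma torsion_free {x : FreeGroup α} {n : ℕ} (hn : 1 ≤ n) (h : x ^ n = 1) : x = 1 := by
  obtain ⟨c, u, hx, hcr, _⟩ := decomp x
  have hun : u ^ n = 1 := by
    have h1 : (c * u * c⁻¹) ^ n = 1 := by rw [← hx]; exact h
    have h3 : c * u ^ n * c⁻¹ = 1 := by rw [← conj_pow]; exact h1
    calc u ^ n = c⁻¹ * (c * u ^ n * c⁻¹) * c := by group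
    _ = 1 := by rw [h3]; group
  have hw : npow n u.toWord = [] := by
    rw [← toWord_pow hcr, hun, FreeGroup.toWord_one]
  have : u.toWord = [] := by
    by_contra hne
    exact npow_ne_nil hne hn hw
  have hu1 : u = 1 := FreeGroup.toWord_eq_nil_iff.mp this
  rw [hx, hu1]
  group

lemma reduced_conj_npow {C U IC : List (α × Bool)} {n : ℕ}
    (hred : Reduced (C ++ U ++ IC)) (hU : CR U) (hUne : U ≠ []) (hn : 1 ≤ n) :
    Reduced (C ++ npow n U ++ IC) := by
  rw [List.append_assoc] at hred ⊢
  obtain ⟨hC, hUIC, hjun⟩ := List.isChain_append.mp hred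
  obtain ⟨hUr, hIC, hjun2⟩ := List.isChain_append.mp hUIC
  refine List.isChain_append.mpr ⟨hC, ?_, ?_⟩
  · refine List.isChain_append.mpr ⟨(CR_npow hU n).1, hIC, ?_⟩
    intro a ha b hb
    rw [getLast?_npow hUne hn] at ha
    exact hjun2 a ha b hb
  · intro a ha b hb
    refine hjun a ha b ?_
    rw [List.head?_append] at hb ⊢
    rwa [head?_npow hUne hn] at hb

lemma core {n : ℕ} (hn : 1 ≤ n) {C U D V : List (α × Bool)}
    (hU : CR U) (hV : CR V) (hUne : U ≠ []) (hVne : V ≠ [])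
    (hle : C.length ≤ D.length)
    (heq : C ++ npow n U ++ FreeGroup.invRev C = D ++ npow n V ++ FreeGroup.invRev D) :
    C = D ∧ U = V := by
  have hCD : C = D.take C.length := by
    have h1 := congrArg (List.take C.length) heq
    rw [List.append_assoc, List.append_assoc, List.take_left,
      List.take_append_of_le_length hle] at h1
    exact h1
  obtain ⟨E, hD⟩ : ∃ E, D = C ++ E :=
    ⟨D.drop C.length, by conv_lhs => rw [← List.take_append_drop C.length D, ← hCD]⟩
  rw [hD, invRev_append] at heq
  simp only [List.append_assoc] at heq
  have h2 := List.append_cancel_left heq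
  have h3 : npow n U = E ++ npow n V ++ FreeGroup.invRev E := by
    have h2' : npow n U ++ FreeGroup.invRev C
        = (E ++ npow n V ++ FreeGroup.invRev E) ++ FreeGroup.invRev C := by
      simpa only [List.append_assoc] using h2
    exact List.append_cancel_right h2'
  have hEnil : E = [] := by
    by_contra hEne
    obtain ⟨e, E', rfl⟩ := List.exists_cons_of_ne_nil hEne
    have hhead : (npow n U).head? = some e := by rw [h3]; simp
    have hlast : (npow n U).getLast? = some (e.1, !e.2) := by
      rw [h3, List.append_assoc, List.getLast?_append_of_ne_nil _
        (by simp [FreeGroup.invRev]), List.getLast?_append_of_ne_nil _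
        (by simp [FreeGroup.invRev])]
      simp [FreeGroup.invRev]
    have := (CR_npow hU n).1
    have hj := (CR_npow hU n).2 (e.1, !e.2) (by rw [hlast]; rfl) e (by rw [hhead]; rfl)
    simp [R] at hj
  subst hEnil
  rw [List.append_nil] at hD
  simp [FreeGroup.invRev] at h3
  have hlen : U.length = V.length := by
    have := congrArg List.length h3
    rw [npow_length, npow_length] at this
    have hn' : n ≠ 0 := by omega
    exact Nat.eq_of_mul_eq_mul_left (by omega) this
  constructor
  · exact hD.symm
  · obtain ⟨m, rfl⟩ : ∃ m, n = m + 1 := ⟨n - 1, by omega⟩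
    have h4 := congrArg (List.take U.length) h3
    rw [npow_succ, npow_succ, List.take_left, hlen, List.take_left] at h4
    exact h4

lemma main (x y : FreeGroup α) (n : ℕ) (hn : 1 ≤ n) (hxy : x ^ n = y ^ n) : x = y := by
  by_cases hx1 : x = 1
  · subst hx1
    rw [one_pow] at hxy
    exact (torsion_free hn hxy.symm).symm
  by_cases hy1 : y = 1
  · subst hy1
    rw [one_pow] at hxy
    exact torsion_free hn hxy
  obtain ⟨c, u, hx, hcru, hwx⟩ := decomp x
  obtain ⟨d, v, hy, hcrv, hwy⟩ := decomp y
  have hUne : u.toWord ≠ [] := by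
    intro h
    exact hx1 (by rw [hx, FreeGroup.toWord_eq_nil_iff.mp h]; group)
  have hVne : v.toWord ≠ [] := by
    intro h
    exact hy1 (by rw [hy, FreeGroup.toWord_eq_nil_iff.mp h]; group)
  -- words of powers
  have hpow : ∀ (c u : FreeGroup α), CR u.toWord → u.toWord ≠ [] →
      (c * u * c⁻¹).toWord = c.toWord ++ u.toWord ++ FreeGroup.invRev c.toWord →
      ((c * u * c⁻¹) ^ n).toWord
        = c.toWord ++ npow n u.toWord ++ FreeGroup.invRev c.toWord := by
    intro c u hcr hne hw
    have h2 : (c * u * c⁻¹) ^ n = c * u ^ n * c⁻¹ := conj_pow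
    have h3 : c * u ^ n * c⁻¹
        = FreeGroup.mk (c.toWord ++ npow n u.toWord ++ FreeGroup.invRev c.toWord) := by
      conv_lhs => rw [← FreeGroup.mk_toWord (x := c)]
      rw [FreeGroup.inv_mk, ← FreeGroup.mk_toWord (x := u ^ n), toWord_pow hcr,
        FreeGroup.mul_mk, FreeGroup.mul_mk]
    have hredL : Reduced (c.toWord ++ u.toWord ++ FreeGroup.invRev c.toWord) := by
      rw [← hw]; exact reduced_toWord _
    rw [h2, h3]
    exact toWord_mk_of_reduced (reduced_conj_npow hredL hcr hne hn)
  have hwx' := hpow c u hcru hUne (by rw [← hx, hwx, FreeGroup.toWord_inv])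
  have hwy' := hpow d v hcrv hVne (by rw [← hy, hwy, FreeGroup.toWord_inv])
  rw [← hx] at hwx'
  rw [← hy] at hwy'
  have heq : c.toWord ++ npow n u.toWord ++ FreeGroup.invRev c.toWord
      = d.toWord ++ npow n v.toWord ++ FreeGroup.invRev d.toWord := by
    rw [← hwx', ← hwy', hxy]
  have hfin : c.toWord = d.toWord ∧ u.toWord = v.toWord := by
    rcases le_total c.toWord.length d.toWord.length with hle | hle
    · exact core hn hcru hcrv hUne hVne hle heq
    · obtain ⟨h1, h2⟩ := core hn hcrv hcru hVne hUne hle heq.symm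
      exact ⟨h1.symm, h2.symm⟩
  have hc : c = d := FreeGroup.toWord_injective hfin.1
  have hu : u = v := FreeGroup.toWord_injective hfin.2
  rw [hx, hy, hc, hu]


end UniqueRoots

/-- roots are unique in free groups: if `x^n = y^n` with `n ≥ 1` then
`x = y`. -/
theorem stmt_12 {α : Type} (x y : FreeGroup α) (n : ℕ) (hn : 1 ≤ n)
    (hxy : x ^ n = y ^ n) : x = y := by
  haveI := Classical.decEq α
  exact UniqueRoots.main x y n hn hxy
end

section
/- Let g, h : F(Σ) → F(Δ) be injective homomorphisms of free groups. Then SD(g,h) = SD(h,g) if and only if the endomorphism φ_{(g,h)} : x ↦ h⁻¹(g(x)) of SD(g,h) is an automorphism of SD(g,h) and the endomorphism φ_{(h,g)} : x ↦ g⁻¹(h(x)) of SD(h,g) is an automorphism of SD(h,g). -/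
lemma sd_le_chain {α β : Type} (g h : FreeGroup α →* FreeGroup β) (i : ℕ) :
    SD g h ≤ SDChain g h i := iInf_le _ i

/-- Stability: `g(SD(g,h)) ≤ h(SD(g,h))`. -/
lemma map_sd_le {α β : Type} (g h : FreeGroup α →* FreeGroup β)
    (hh : Function.Injective h) :
    Subgroup.map g (SD g h) ≤ Subgroup.map h (SD g h) := by
  rintro y ⟨x, hx, rfl⟩
  have key : ∀ i, ∃ z, z ∈ SDChain g h i ∧ h z = g x := by
    intro i
    have h1 : x ∈ SDChain g h (i + 1) := sd_le_chain g h (i + 1) hx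
    simp only [SDChain, Subgroup.mem_comap, Subgroup.mem_inf, Subgroup.mem_map] at h1
    obtain ⟨z, hz, hz'⟩ := h1.2
    exact ⟨z, hz, hz'⟩
  obtain ⟨z0, hz0, hz0'⟩ := key 0
  refine ⟨z0, ?_, hz0'⟩
  show z0 ∈ SD g h
  rw [SD, Subgroup.mem_iInf]
  intro i
  obtain ⟨z, hz, hz'⟩ := key i
  have : z = z0 := hh (hz'.trans hz0'.symm)
  rwa [this] at hz

/-- Maximality: any subgroup `K` with `g(K) ≤ h(K)` is contained in `SD(g,h)`. -/
lemma le_sd {α β : Type} (g h : FreeGroup α →* FreeGroup β) (K : Subgroup (FreeGroup α))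
    (hK : Subgroup.map g K ≤ Subgroup.map h K) : K ≤ SD g h := by
  have H : ∀ i, K ≤ SDChain g h i := by
    intro i
    induction i with
    | zero => exact le_top
    | succ i ih =>
      intro x hx
      simp only [SDChain, Subgroup.mem_comap, Subgroup.mem_inf]
      refine ⟨⟨x, ih hx, rfl⟩, ?_⟩
      exact Subgroup.map_mono ih (hK ⟨x, hx, rfl⟩)
  exact le_iInf H

/-- If `g(K) = h(K)` then there is an automorphism `φ` of `K` with `h ∘ φ = g` on `K`. -/
lemma exists_equiv {α β : Type} (g h : FreeGroup α →* FreeGroup β)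
    (hg : Function.Injective g) (hh : Function.Injective h)
    (K : Subgroup (FreeGroup α)) (heq : Subgroup.map g K = Subgroup.map h K) :
    ∃ φ : ↥K ≃* ↥K, ∀ x : ↥K, h ((φ x : ↥K) : FreeGroup α) = g (x : FreeGroup α) := by
  have hmem : ∀ x : ↥K, ∃ z, z ∈ K ∧ h z = g x := by
    intro x
    have : g (x : FreeGroup α) ∈ Subgroup.map h K := by
      rw [← heq]; exact ⟨x, x.2, rfl⟩
    obtain ⟨z, hz, hz'⟩ := this
    exact ⟨z, hz, hz'⟩
  choose f hf1 hf2 using hmem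
  let F : ↥K →* ↥K :=
    { toFun := fun x => ⟨f x, hf1 x⟩
      map_one' := by
        apply Subtype.ext
        apply hh
        simp [hf2]
      map_mul' := by
        intro a b
        apply Subtype.ext
        apply hh
        simp [hf2] }
  have hFdef : ∀ x : ↥K, ((F x : ↥K) : FreeGroup α) = f x := fun x => rfl
  have hFinj : Function.Injective F := by
    intro a b hab
    apply Subtype.ext
    apply hg
    have := congrArg (fun z : ↥K => h (z : FreeGroup α)) hab
    simpa [hFdef, hf2] using this
  have hFsurj : Function.Surjective F := by
    intro y
    have : h (y : FreeGroup α) ∈ Subgroup.map g K := by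
      rw [heq]; exact ⟨y, y.2, rfl⟩
    obtain ⟨x, hx, hx'⟩ := this
    refine ⟨⟨x, hx⟩, ?_⟩
    apply Subtype.ext
    apply hh
    rw [hFdef, hf2, hx']
  refine ⟨MulEquiv.ofBijective F ⟨hFinj, hFsurj⟩, ?_⟩
  intro x
  exact hf2 x

/-- for injective `g, h`, `SD(g,h) = SD(h,g)` iff the endomorphism
`φ_{(g,h)} : x ↦ h⁻¹(g x)` of `SD(g,h)` is an automorphism and the endomorphism
`φ_{(h,g)} : x ↦ g⁻¹(h x)` of `SD(h,g)` is an automorphism. (An automorphism agreeing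
with `x ↦ h⁻¹(g x)` is expressed as a `MulEquiv` `φ` with `h (φ x) = g x`.) -/
theorem stmt_17 {α β : Type} (g h : FreeGroup α →* FreeGroup β)
    (hg : Function.Injective g) (hh : Function.Injective h) :
    SD g h = SD h g ↔
      ((∃ φ : ↥(SD g h) ≃* ↥(SD g h),
          ∀ x : ↥(SD g h), h ((φ x : ↥(SD g h)) : FreeGroup α) = g (x : FreeGroup α)) ∧
       (∃ ψ : ↥(SD h g) ≃* ↥(SD h g),
          ∀ x : ↥(SD h g), g ((ψ x : ↥(SD h g)) : FreeGroup α) = h (x : FreeGroup α))) := by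
  constructor
  · intro hSD
    have h1 : Subgroup.map g (SD g h) ≤ Subgroup.map h (SD g h) := map_sd_le g h hh
    have h2 : Subgroup.map h (SD g h) ≤ Subgroup.map g (SD g h) := by
      rw [hSD]; exact map_sd_le h g hg
    have heq : Subgroup.map g (SD g h) = Subgroup.map h (SD g h) := le_antisymm h1 h2
    have heq' : Subgroup.map h (SD h g) = Subgroup.map g (SD h g) := by
      rw [← hSD]; exact heq.symm
    exact ⟨exists_equiv g h hg hh (SD g h) heq, exists_equiv h g hh hg (SD h g) heq'⟩
  · rintro ⟨⟨φ, hφ⟩, ⟨ψ, hψ⟩⟩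
    have h1 : Subgroup.map h (SD g h) ≤ Subgroup.map g (SD g h) := by
      rintro y ⟨x, hx, rfl⟩
      obtain ⟨x', hx'⟩ := φ.surjective ⟨x, hx⟩
      refine ⟨(x' : FreeGroup α), x'.2, ?_⟩
      have := hφ x'
      rw [hx'] at this
      exact this.symm
    have h2 : Subgroup.map g (SD h g) ≤ Subgroup.map h (SD h g) := by
      rintro y ⟨x, hx, rfl⟩
      obtain ⟨x', hx'⟩ := ψ.surjective ⟨x, hx⟩
      refine ⟨(x' : FreeGroup α), x'.2, ?_⟩
      have := hψ x'
      rw [hx'] at this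
      exact this.symm
    exact le_antisymm (le_sd h g (SD g h) h1) (le_sd g h (SD h g) h2)
end

section
/- For the homomorphisms g, h : F(x,y) → F(a,b) defined by g(x) = ab, g(y) = 1, h(x) = a², h(y) = b², the stable domain SD(g,h) equals ker(g), which is a nontrivial normal subgroup of infinite index in F(x,y) and hence not finitely generated. -/
/-- `g : F(x,y) → F(a,b)`, `x ↦ ab`, `y ↦ 1`.  (`x, a` are `of true`; `y, b` are
`of false`.) -/
def gEx : FreeGroup Bool →* FreeGroup Bool :=
  FreeGroup.lift (fun s => if s then FreeGroup.of true * FreeGroup.of false else 1)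

/-- `h : F(x,y) → F(a,b)`, `x ↦ a²`, `y ↦ b²`. -/
def hEx : FreeGroup Bool →* FreeGroup Bool :=
  FreeGroup.lift (fun s => if s then FreeGroup.of true ^ 2 else FreeGroup.of false ^ 2)

namespace Stmt18

noncomputable section

abbrev F := FreeGroup Bool
abbrev x : F := FreeGroup.of true
abbrev y : F := FreeGroup.of false

@[simp] lemma g_x : gEx x = x * y := by simp [gEx]
@[simp] lemma g_y : gEx y = 1 := by simp [gEx]

/-! ### A dihedral-type representation separating `range gEx` from `range hEx` -/

/-- `a ↦ (z ↦ -z)`, `b ↦ (z ↦ 1 - z)`. -/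
def φ : F →* Equiv.Perm ℤ :=
  FreeGroup.lift (fun s => if s then Equiv.neg ℤ else Equiv.subLeft 1)

@[simp] lemma φ_x : φ x = Equiv.neg ℤ := by simp [φ]
@[simp] lemma φ_y : φ y = Equiv.subLeft 1 := by simp [φ]

lemma φ_comp_h (w : F) : φ (hEx w) = 1 := by
  have : φ.comp hEx = 1 := by
    apply FreeGroup.ext_hom
    intro s
    cases s <;> simp [hEx, pow_two] <;> ext z <;> simp [Equiv.Perm.mul_apply]
  simpa using DFunLike.congr_fun this w

lemma φ_ab : φ (x * y) = Equiv.addRight (-1 : ℤ) := by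
  ext z
  simp [Equiv.Perm.mul_apply]
  ring

lemma ab_pow_eq_one {n : ℤ} (hn : (x * y) ^ n = 1) : n = 0 := by
  have := congrArg φ hn
  rw [map_zpow, φ_ab, map_one, Equiv.zsmul_addRight] at this
  have := congrArg (fun e : Equiv.Perm ℤ => e 0) this
  simpa using this

/-- counting the `x`-exponent sum: `x ↦ 1`, `y ↦ 0`. -/
def ca : F →* Multiplicative ℤ :=
  FreeGroup.lift (fun s => if s then Multiplicative.ofAdd 1 else 1)

def σ (w : F) : ℤ := Multiplicative.toAdd (ca w)

@[simp] lemma σ_mul (u v : F) : σ (u * v) = σ u + σ v := by simp [σ]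
@[simp] lemma σ_one : σ 1 = 0 := by simp [σ]
@[simp] lemma σ_inv (u : F) : σ u⁻¹ = - σ u := by simp [σ]

lemma g_eq (w : F) : gEx w = (x * y) ^ (σ w) := by
  have : gEx = ((zpowersHom F (x * y)).comp ca) := by
    apply FreeGroup.ext_hom
    intro s
    cases s <;> simp [gEx, ca]
  rw [this]; simp [σ]

lemma ker_σ {w : F} (hw : w ∈ gEx.ker) : σ w = 0 := by
  apply ab_pow_eq_one
  rw [← g_eq]
  exact hw

lemma range_inf : gEx.range ⊓ hEx.range = ⊥ := by
  rw [eq_bot_iff]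
  rintro w ⟨⟨u, rfl⟩, v, hv⟩
  have h1 : φ (gEx u) = 1 := by rw [← hv, φ_comp_h]
  rw [g_eq u, map_zpow, φ_ab, Equiv.zsmul_addRight] at h1
  have h2 := congrArg (fun e : Equiv.Perm ℤ => e 0) h1
  simp at h2
  rw [Subgroup.mem_bot, g_eq u, h2]
  simp

/-! ### The chain stabilizes at `ker gEx` -/

lemma chain_succ : ∀ i : ℕ, SDChain gEx hEx (i + 1) = gEx.ker := by
  intro i
  induction i with
  | zero =>
      show Subgroup.comap gEx (Subgroup.map gEx ⊤ ⊓ Subgroup.map hEx ⊤) = _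
      rw [← MonoidHom.range_eq_map, ← MonoidHom.range_eq_map, range_inf, gEx.comap_bot]
  | succ k ih =>
      show Subgroup.comap gEx (Subgroup.map gEx (SDChain gEx hEx (k+1)) ⊓ _) = _
      rw [ih, (Subgroup.map_eq_bot_iff _).mpr le_rfl, bot_inf_eq, gEx.comap_bot]

lemma sd_eq : SD gEx hEx = gEx.ker := by
  apply le_antisymm
  · exact (chain_succ 0) ▸ iInf_le _ 1
  · refine le_iInf fun i => ?_
    cases i with
    | zero => exact le_top
    | succ k => rw [chain_succ k]

/-! ### Nontriviality and infinite index -/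

lemma ker_ne_bot : gEx.ker ≠ ⊥ := by
  intro h
  have hy : y ∈ gEx.ker := by rw [MonoidHom.mem_ker, g_y]
  rw [h, Subgroup.mem_bot] at hy
  exact FreeGroup.of_ne_one false hy

lemma ker_index : gEx.ker.index = 0 := by
  rw [Subgroup.index_ker]
  have : Infinite gEx.range :=
    Infinite.of_injective
      (fun n : ℤ => (⟨(x * y) ^ n, ⟨x ^ n, by rw [map_zpow, g_x]⟩⟩ : gEx.range))
      (fun n m hnm => by
        have h : (x * y) ^ n = (x * y) ^ m := congrArg Subtype.val hnm
        have h0 : (x * y) ^ (n - m) = 1 := by rw [zpow_sub, h, mul_inv_cancel]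
        have := ab_pow_eq_one h0
        omega)
  exact Nat.card_eq_zero_of_infinite

/-! ### Lamplighter representation: the kernel is not finitely generated -/

abbrev L := (ℤ →₀ ℤ) × ℤ

def X : Equiv.Perm L := (Equiv.refl _).prodCongr (Equiv.addRight 1)

def Y : Equiv.Perm L where
  toFun p := (p.1 + Finsupp.single p.2 1, p.2)
  invFun p := (p.1 - Finsupp.single p.2 1, p.2)
  left_inv p := by simp
  right_inv p := by simp

def Φ : F →* Equiv.Perm L := FreeGroup.lift (fun s => if s then X else Y)

lemma pure_eq (s : Bool) : (pure s : F) = FreeGroup.of s := rfl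

@[simp] lemma Φ_x : Φ x = X := by simp [Φ]
@[simp] lemma Φ_y : Φ y = Y := by simp [Φ]

lemma X_apply (f : ℤ →₀ ℤ) (k : ℤ) : X (f, k) = (f, k + 1) := rfl
lemma Y_apply (f : ℤ →₀ ℤ) (k : ℤ) : Y (f, k) = (f + Finsupp.single k 1, k) := rfl

lemma Φ_struct (w : F) : ∃ d : ℤ → (ℤ →₀ ℤ), ∀ f k, Φ w (f, k) = (f + d k, k + σ w) := by
  induction w using FreeGroup.induction_on with
  | C1 => exact ⟨0, fun f k => by simp⟩
  | of s =>
      cases s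
      · exact ⟨fun k => Finsupp.single k 1, fun f k => by rw [Φ_y, Y_apply]; simp [σ, ca]⟩
      · exact ⟨0, fun f k => by rw [Φ_x, X_apply]; simp [σ, ca]⟩
  | inv_of s ih =>
      obtain ⟨d, hd⟩ := ih
      refine ⟨fun k => -(d (k - σ (FreeGroup.of s))), fun f k => ?_⟩
      have key : Φ (FreeGroup.of s) ((Φ (FreeGroup.of s)⁻¹) (f, k)) = (f, k) := by
        rw [← Equiv.Perm.mul_apply, ← map_mul, mul_inv_cancel, map_one,
          Equiv.Perm.one_apply]
      set p := (Φ (FreeGroup.of s)⁻¹) (f, k) with hp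
      rw [show p = (p.1, p.2) from rfl, hd] at key
      have h1 : p.1 + d p.2 = f := congrArg Prod.fst key
      have h2 : p.2 + σ (FreeGroup.of s) = k := congrArg Prod.snd key
      have hk2 : p.2 = k - σ (FreeGroup.of s) := by omega
      show p = _
      rw [show p = (p.1, p.2) from rfl]
      refine Prod.ext ?_ ?_
      · show p.1 = f + -(d (k - σ (FreeGroup.of s)))
        rw [← hk2, ← h1]; abel
      · show p.2 = k + σ (FreeGroup.of s)⁻¹
        rw [σ_inv, hk2]; ring
  | mul u v ihu ihv =>
      obtain ⟨du, hdu⟩ := ihu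
      obtain ⟨dv, hdv⟩ := ihv
      refine ⟨fun k => dv k + du (k + σ v), fun f k => ?_⟩
      rw [map_mul, Equiv.Perm.mul_apply, hdv, hdu]
      refine Prod.ext (by simp [add_assoc]) (by simp; ring)

/-- the "lamp configuration" of a word. -/
def D (w : F) : ℤ →₀ ℤ := (Φ w (0, 0)).1

@[simp] lemma D_one : D 1 = 0 := by simp [D]

lemma D_mul {u v : F} (hv : σ v = 0) : D (u * v) = D u + D v := by
  obtain ⟨du, hdu⟩ := Φ_struct u
  obtain ⟨dv, hdv⟩ := Φ_struct v
  have hDu : D u = du 0 := by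
    show (Φ u ((0 : ℤ →₀ ℤ), (0 : ℤ))).1 = du 0
    rw [hdu]; exact zero_add _
  have hDv : D v = dv 0 := by
    show (Φ v ((0 : ℤ →₀ ℤ), (0 : ℤ))).1 = dv 0
    rw [hdv]; exact zero_add _
  have hΦv : Φ v ((0 : ℤ →₀ ℤ), (0 : ℤ)) = (D v, (0 : ℤ)) := by
    rw [hdv]
    exact Prod.ext ((zero_add _).trans hDv.symm) (by rw [hv, add_zero])
  show (Φ (u * v) ((0 : ℤ →₀ ℤ), (0 : ℤ))).1 = D u + D v
  rw [map_mul, Equiv.Perm.mul_apply, hΦv, hdu, hDu]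
  exact add_comm _ _

lemma D_inv {u : F} (hu : σ u = 0) : D u⁻¹ = - D u := by
  have h := D_mul (u := u) (v := u⁻¹) (by simp [hu])
  rw [mul_inv_cancel, D_one] at h
  linear_combination (norm := abel) -h

/-- words with zero `x`-exponent sum and lamps supported in `A`. -/
def K (A : Finset ℤ) : Subgroup F where
  carrier := {w | σ w = 0 ∧ (D w).support ⊆ A}
  one_mem' := by simp
  mul_mem' := by
    rintro u v ⟨hu1, hu2⟩ ⟨hv1, hv2⟩
    refine ⟨by simp [hu1, hv1], ?_⟩
    rw [D_mul hv1]
    exact (Finsupp.support_add).trans (Finset.union_subset hu2 hv2)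
  inv_mem' := by
    rintro u ⟨hu1, hu2⟩
    refine ⟨by simp [hu1], ?_⟩
    rw [D_inv hu1, Finsupp.support_neg]
    exact hu2

lemma X_inv_apply (f : ℤ →₀ ℤ) (k : ℤ) : X⁻¹ (f, k) = (f, k - 1) := by
  have : X (f, k - 1) = (f, k) := by rw [X_apply]; ring_nf
  rw [← this, ← Equiv.Perm.mul_apply, inv_mul_cancel, Equiv.Perm.one_apply]

lemma Φ_xpow (m : ℤ) (f : ℤ →₀ ℤ) (k : ℤ) : Φ (x ^ m) (f, k) = (f, k + m) := by
  induction m using Int.induction_on generalizing k with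
  | zero => simp
  | succ n ih =>
      rw [zpow_add, zpow_one, map_mul, Equiv.Perm.mul_apply, Φ_x, X_apply, ih]
      exact Prod.ext rfl (by push_cast; ring)
  | pred n ih =>
      rw [show (-(n : ℤ) - 1) = -(n : ℤ) + (-1) from by ring, zpow_add, map_mul,
        Equiv.Perm.mul_apply, zpow_neg_one, map_inv, Φ_x, X_inv_apply, ih]
      exact Prod.ext rfl (by push_cast; ring)

lemma D_conj (m : ℤ) : D (x ^ m * y * x ^ (-m)) = Finsupp.single (-m) 1 := by
  have h1 : Φ (x ^ (-m)) ((0 : ℤ →₀ ℤ), (0 : ℤ)) = (0, -m) := by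
    rw [Φ_xpow]; exact Prod.ext rfl (zero_add _)
  show (Φ (x ^ m * y * x ^ (-m)) ((0 : ℤ →₀ ℤ), (0 : ℤ))).1 = _
  rw [map_mul, map_mul, Equiv.Perm.mul_apply, Equiv.Perm.mul_apply, h1, Φ_y, Y_apply,
    Φ_xpow]
  exact zero_add _

lemma ker_not_fg : ¬ gEx.ker.FG := by
  rintro ⟨S, hS⟩
  set A := S.sup (fun s => (D s).support) with hA
  have hSK : ↑S ⊆ (K A : Set F) := by
    intro s hs
    have hsker : s ∈ gEx.ker := hS ▸ Subgroup.subset_closure hs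
    exact ⟨ker_σ hsker, Finset.le_sup (f := fun s => (D s).support) hs⟩
  have hle : gEx.ker ≤ K A := hS ▸ (Subgroup.closure_le _).mpr hSK
  obtain ⟨z, hz⟩ := Infinite.exists_notMem_finset A
  have hw : x ^ (-z) * y * x ^ (-(-z)) ∈ gEx.ker := by
    rw [MonoidHom.mem_ker, map_mul, map_mul, map_zpow, map_zpow, g_x, g_y]
    group
  have hmem := hle hw
  obtain ⟨-, hsupp⟩ := hmem
  rw [D_conj, Finsupp.support_single_ne_zero _ one_ne_zero] at hsupp
  exact hz (hsupp (by simp))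

end

end Stmt18

/-- for these `g, h`, the stable domain `SD(g,h)` equals `ker g`, which is
a nontrivial normal subgroup of infinite index in `F(x,y)`, hence not finitely
generated. -/
theorem stmt_18 :
    SD gEx hEx = gEx.ker ∧ gEx.ker ≠ ⊥ ∧ gEx.ker.Normal ∧
    gEx.ker.index = 0 ∧ ¬ gEx.ker.FG := by
  exact ⟨Stmt18.sd_eq, Stmt18.ker_ne_bot, inferInstance, Stmt18.ker_index,
    Stmt18.ker_not_fg⟩
end

section
/- Fix a class 𝒞 of free group homomorphisms that is closed under restrictions to finitely generated subgroups. Suppose that for all g, h : F(Σ) → F(Δ) in 𝒞 with h injective and Σ finite one has rk(Eq(g,h)) ≤ |Σ|. Then for all such g, h, the equaliser Eq(g,h) is an inert subgroup of F(Σ): for every subgroup K ≤ F(Σ), rk(Eq(g,h) ∩ K) ≤ rk(K). -/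
open Finsupp in
/-- A free group generated by `n` elements has at most `n` basis elements. -/
lemma freeGroup_rank_le {γ : Type} (S : Finset (FreeGroup γ))
    (hS : Subgroup.closure (S : Set (FreeGroup γ)) = ⊤) :
    Finite γ ∧ Nat.card γ ≤ S.card := by
  classical
  let φ : FreeGroup γ →* Multiplicative (γ →₀ ℤ) :=
    FreeGroup.lift (fun x => Multiplicative.ofAdd (Finsupp.single x 1))
  let A : Set (γ →₀ ℤ) := (fun w => Multiplicative.toAdd (φ w)) '' (S : Set (FreeGroup γ))
  -- the subgroup of words landing in the span of `A`
  let H : Subgroup (FreeGroup γ) :=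
    { carrier := {w | Multiplicative.toAdd (φ w) ∈ Submodule.span ℤ A}
      one_mem' := by simpa using (Submodule.span ℤ A).zero_mem
      mul_mem' := by
        intro a b ha hb
        simpa [map_mul] using (Submodule.span ℤ A).add_mem ha hb
      inv_mem' := by
        intro a ha
        simpa [map_inv] using (Submodule.span ℤ A).neg_mem ha }
  have hSH : (S : Set (FreeGroup γ)) ⊆ H := by
    intro s hs
    exact Submodule.subset_span ⟨s, hs, rfl⟩
  have hHtop : ∀ w : FreeGroup γ, w ∈ H := by
    intro w
    have := Subgroup.closure_le (K := H) (k := (S : Set (FreeGroup γ)))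
    have h2 : Subgroup.closure (S : Set (FreeGroup γ)) ≤ H := (this).2 hSH
    rw [hS] at h2
    exact h2 (Subgroup.mem_top w)
  have hspan : Submodule.span ℤ A = ⊤ := by
    rw [eq_top_iff, ← (Finsupp.basisSingleOne (R := ℤ) (ι := γ)).span_eq, Submodule.span_le]
    rintro _ ⟨x, rfl⟩
    have hx : Multiplicative.toAdd (φ (FreeGroup.of x)) ∈ Submodule.span ℤ A :=
      hHtop (FreeGroup.of x)
    simpa [φ, FreeGroup.lift_apply_of] using hx
  have hle := (Finsupp.basisSingleOne (R := ℤ) (ι := γ)).le_span (J := A) hspan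
  have hinj : Function.Injective (Finsupp.basisSingleOne (R := ℤ) (ι := γ)) :=
    Module.Basis.injective _
  have h1 : (Cardinal.mk γ) ≤ Cardinal.mk A := by
    rwa [Cardinal.mk_range_eq _ hinj] at hle
  have h2 : Cardinal.mk A ≤ S.card := by
    refine (Cardinal.mk_image_le).trans ?_
    simp [Cardinal.mk_coe_finset]
  have h3 : (Cardinal.mk γ) ≤ (S.card : Cardinal) := h1.trans h2
  have hfin : Finite γ := by
    rw [← Cardinal.lt_aleph0_iff_finite]
    exact h3.trans_lt (Cardinal.nat_lt_aleph0 _)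
  refine ⟨hfin, ?_⟩
  haveI := Fintype.ofFinite γ
  rw [Nat.card_eq_fintype_card]
  exact_mod_cast (Cardinal.mk_fintype γ) ▸ h3

/-- let `C` be a class of homomorphisms between free groups closed under
restriction to finitely generated subgroups (viewed as abstract free groups via any
isomorphism `FreeGroup γ ≃* K`).  If `rk(Eq(g,h)) ≤ |Σ|` whenever `g, h : F(Σ) → F(Δ)`
are in `C` with `h` injective and `Σ` finite, then each such `Eq(g,h)` is inert in
`F(Σ)`: `rk(Eq(g,h) ∩ K) ≤ rk(K)` for every subgroup `K`. -/
theorem stmt_19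
    (C : ∀ (α β : Type), (FreeGroup α →* FreeGroup β) → Prop)
    (hclosed : ∀ (α β : Type) (g : FreeGroup α →* FreeGroup β), C α β g →
      ∀ (K : Subgroup (FreeGroup α)), K.FG →
        ∀ (γ : Type) (e : FreeGroup γ ≃* ↥K),
          C γ β (g.comp (K.subtype.comp e.toMonoidHom)))
    (hrank : ∀ (α β : Type) [Fintype α] (g h : FreeGroup α →* FreeGroup β),
      C α β g → C α β h → Function.Injective h →
        rkLe (g.eqLocus h) (Fintype.card α)) :
    ∀ (α β : Type) [Fintype α] (g h : FreeGroup α →* FreeGroup β),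
      C α β g → C α β h → Function.Injective h →
        ∀ (K : Subgroup (FreeGroup α)) (n : ℕ), rkLe K n → rkLe (g.eqLocus h ⊓ K) n := by
  intro α β _ g h hg hh hinj K n hK
  classical
  obtain ⟨S, hScard, hSclos⟩ := hK
  have hKfg : K.FG := ⟨S, hSclos⟩
  haveI : IsFreeGroup ↥K := inferInstance
  let γ : Type := IsFreeGroup.Generators ↥K
  let e : FreeGroup γ ≃* ↥K := IsFreeGroup.mulEquiv ↥K
  -- S lies in K
  have hSK : (S : Set (FreeGroup α)) ⊆ K := by
    rw [← hSclos]; exact Subgroup.subset_closure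
  -- transfer the generating set into ↥K
  let T : Finset ↥K := S.subtype (· ∈ K)
  have hTcard : T.card ≤ S.card := (Finset.card_subtype _ _).le.trans
    (Finset.card_filter_le _ _)
  have hTval : Subtype.val '' (T : Set ↥K) = (S : Set (FreeGroup α)) := by
    ext x
    simp only [Set.mem_image, Finset.mem_coe, Finset.mem_subtype, T]
    constructor
    · rintro ⟨⟨y, hy⟩, hyS, rfl⟩; exact hyS
    · intro hx; exact ⟨⟨x, hSK hx⟩, hx, rfl⟩
  have hTclos : Subgroup.closure (T : Set ↥K) = ⊤ := by
    apply Subgroup.map_injective K.subtype_injective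
    rw [MonoidHom.map_closure, Subgroup.coe_subtype, hTval, hSclos, ← MonoidHom.range_eq_map,
      Subgroup.range_subtype]
  -- pull back to FreeGroup γ
  let T' : Finset (FreeGroup γ) := T.image e.symm
  have hT'clos : Subgroup.closure (T' : Set (FreeGroup γ)) = ⊤ := by
    have : (T' : Set (FreeGroup γ)) = e.symm '' (T : Set ↥K) := by
      simp [T', Finset.coe_image]
    rw [this, show (⇑e.symm : ↥K → FreeGroup γ) = ⇑e.symm.toMonoidHom from rfl,
      ← MonoidHom.map_closure e.symm.toMonoidHom, hTclos]
    exact Subgroup.map_top_of_surjective _ e.symm.surjective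
  obtain ⟨hfin, hcard⟩ := freeGroup_rank_le T' hT'clos
  haveI := Fintype.ofFinite γ
  have hγcard : Fintype.card γ ≤ n := by
    rw [← Nat.card_eq_fintype_card]
    exact hcard.trans ((Finset.card_image_le).trans (hTcard.trans hScard))
  -- apply the rank hypothesis to the restrictions
  let φ : FreeGroup γ →* FreeGroup α := K.subtype.comp e.toMonoidHom
  have hg' := hclosed α β g hg K hKfg γ e
  have hh' := hclosed α β h hh K hKfg γ e
  have hinj' : Function.Injective (h.comp φ) := by
    apply hinj.comp
    exact K.subtype_injective.comp e.injective
  obtain ⟨U, hUcard, hUclos⟩ := hrank γ β (g.comp φ) (h.comp φ) hg' hh' hinj'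
  -- push the generating set of the equaliser forward
  refine ⟨U.image φ, (Finset.card_image_le).trans (hUcard.trans hγcard), ?_⟩
  have hcoe : ((U.image φ : Finset (FreeGroup α)) : Set (FreeGroup α)) = φ '' U := by
    simp [Finset.coe_image]
  rw [hcoe, ← MonoidHom.map_closure, hUclos]
  -- map φ (eqLocus (g∘φ) (h∘φ)) = eqLocus g h ⊓ K
  have hloc : (g.comp φ).eqLocus (h.comp φ) = Subgroup.comap φ (g.eqLocus h) := by
    ext x; rfl
  have hrange : φ.range = K := by
    ext x
    constructor
    · rintro ⟨y, rfl⟩; exact (e y).2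
    · intro hx; exact ⟨e.symm ⟨x, hx⟩, by simp [φ]⟩
  rw [hloc, Subgroup.map_comap_eq, hrange]
  exact inf_comm _ _
end
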